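/- arXiv:1512.08110 — 7 statements merged into one kernel-verified Lean document; each statement's English description precedes it below -/
import Mathlib

section
/- Double robustness of the efficient influence function: let D_{η,θ}(Z) = -(1/f(θ))·[ (M/e(X))·(1_{Y ≤ θ} - G(θ|1,X)) + G(θ|1,X) - q ], where η = (G, e). If either G = G₀ (the true conditional distribution of Y given M=1, X) or e = e₀ (the true missingness probability P₀(M=1|X)), then E₀[D_{η,θ₀}(Z)] = 0, where θ₀ is the true q-th quantile satisfying G₀-based F₀(θ₀) = q. -/
open MeasureTheory


private lemma int_three {Ω : Type*} [MeasurableSpace Ω] (P : MeasureTheory.Measure Ω)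
    (f g h : Ω → ℝ) (hf : MeasureTheory.Integrable f P) (hg : MeasureTheory.Integrable g P)
    (hh : MeasureTheory.Integrable h P) :
    ∫ ω, (f ω + g ω + h ω) ∂P = (∫ ω, f ω ∂P) + (∫ ω, g ω ∂P) + ∫ ω, h ω ∂P := by
  have h1 : MeasureTheory.Integrable (fun ω => f ω + g ω) P := hf.add hg
  rw [MeasureTheory.integral_add h1 hh, MeasureTheory.integral_add hf hg]

/-- Double robustness of the efficient influence function: if either `G = G₀`
or `e = e₀` (on the support of `X`), then `E₀[D_{η,θ₀}(Z)] = 0`. -/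
theorem stmt1 {Ω α : Type*} [MeasurableSpace Ω] [Fintype α] [MeasurableSpace α]
    [MeasurableSingletonClass α]
    (P : Measure Ω) [IsProbabilityMeasure P]
    (X : Ω → α) (M : Ω → ℕ) (Y : Ω → ℝ)
    (hX : Measurable X) (hM : Measurable M) (hY : Measurable Y)
    (θ₀ q fθ : ℝ) (hf : 0 < fθ) (hq : q ∈ Set.Ioo (0 : ℝ) 1)
    -- candidate nuisances:
    (e : α → ℝ) (G : α → ℝ)
    (he : ∀ x, e x ∈ Set.Ioc (0 : ℝ) 1) (hG : ∀ x, G x ∈ Set.Icc (0 : ℝ) 1)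
    -- true nuisances:
    (e₀ G₀ : α → ℝ)
    (he₀ : ∀ x, e₀ x = (P ({ω | M ω = 1} ∩ {ω | X ω = x})).toReal
                        / (P {ω | X ω = x}).toReal)
    (hG₀ : ∀ x, G₀ x = (P ({ω | Y ω ≤ θ₀} ∩ {ω | M ω = 1} ∩ {ω | X ω = x})).toReal
                        / (P ({ω | M ω = 1} ∩ {ω | X ω = x})).toReal)
    -- conditional independence  Y ⟂ M ∣ X  (for the event {Y ≤ θ₀}):
    (hCI : ∀ x : α,
      P ({ω | Y ω ≤ θ₀} ∩ {ω | M ω = 1} ∩ {ω | X ω = x}) * P {ω | X ω = x}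
        = P ({ω | Y ω ≤ θ₀} ∩ {ω | X ω = x}) * P ({ω | M ω = 1} ∩ {ω | X ω = x}))
    -- positivity:
    (hpos : ∀ x : α, P {ω | X ω = x} ≠ 0 → P ({ω | M ω = 1} ∩ {ω | X ω = x}) ≠ 0)
    -- θ₀ is the true q-th quantile:  F₀(θ₀) = q :
    (hθ₀ : ∑ x : α, G₀ x * (P {ω | X ω = x}).toReal = q)
    -- double robustness hypothesis: at least one nuisance is correct on the support of X:
    (hDR : (∀ x : α, P {ω | X ω = x} ≠ 0 → G x = G₀ x)
           ∨ (∀ x : α, P {ω | X ω = x} ≠ 0 → e x = e₀ x)) :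
    ∫ ω, -(1 / fθ)
        * ((Set.indicator {ω' | M ω' = 1} (fun _ => (1 : ℝ)) ω / e (X ω))
              * (Set.indicator {ω' | Y ω' ≤ θ₀} (fun _ => (1 : ℝ)) ω - G (X ω))
            + G (X ω) - q) ∂P = 0 := by

  classical
  set A : Set Ω := {ω | Y ω ≤ θ₀} with hA_def
  set B : Set Ω := {ω | M ω = 1} with hB_def
  set C : α → Set Ω := fun x => {ω | X ω = x} with hC_def
  have hAm : MeasurableSet A := measurableSet_le hY measurable_const
  have hBm : MeasurableSet B := hM (measurableSet_singleton 1)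
  have hCm : ∀ x : α, MeasurableSet (C x) := fun x => hX (measurableSet_singleton x)
  have hfne : fθ ≠ 0 := hf.ne'
  -- pointwise decomposition of the integrand
  have key : ∀ ω, -(1 / fθ)
        * ((B.indicator (fun _ => (1 : ℝ)) ω / e (X ω))
              * (A.indicator (fun _ => (1 : ℝ)) ω - G (X ω))
            + G (X ω) - q)
      = ∑ x : α, ((A ∩ B ∩ C x).indicator (fun _ => -(1/fθ) * (1 / e x)) ω
          + (B ∩ C x).indicator (fun _ => (1/fθ) * (G x / e x)) ω
          + (C x).indicator (fun _ => -(1/fθ) * (G x - q)) ω) := by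
    intro ω
    rw [Finset.sum_eq_single (X ω)]
    · by_cases hA : ω ∈ A <;> by_cases hB : ω ∈ B <;>
        simp [Set.indicator_apply, hA, hB, hC_def, Set.mem_setOf_eq] <;> ring
    · intro x _ hx
      have hnc : ω ∉ C x := by
        intro h
        have h' : X ω = x := h
        exact hx h'.symm
      simp [Set.indicator_apply, Set.mem_inter_iff, hnc]
    · intro h; exact absurd (Finset.mem_univ _) h
  have hint : ∀ (s : Set Ω), MeasurableSet s → ∀ (c : ℝ),
      Integrable (s.indicator (fun _ => c)) P :=
    fun s hs c => (integrable_const c).indicator hs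
  rw [integral_congr_ae (Filter.Eventually.of_forall key)]
  rw [show (∫ ω, ∑ x : α, ((A ∩ B ∩ C x).indicator (fun _ => -(1/fθ) * (1 / e x)) ω
          + (B ∩ C x).indicator (fun _ => (1/fθ) * (G x / e x)) ω
          + (C x).indicator (fun _ => -(1/fθ) * (G x - q)) ω) ∂P)
      = ∑ x : α, ∫ ω, ((A ∩ B ∩ C x).indicator (fun _ => -(1/fθ) * (1 / e x)) ω
          + (B ∩ C x).indicator (fun _ => (1/fθ) * (G x / e x)) ω
          + (C x).indicator (fun _ => -(1/fθ) * (G x - q)) ω) ∂P from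
    integral_finset_sum _ (fun x _ =>
      ((hint _ ((hAm.inter hBm).inter (hCm x)) _).add (hint _ (hBm.inter (hCm x)) _)).add
        (hint _ (hCm x) _))]
  have hsplit : ∀ x : α,
      ∫ ω, ((A ∩ B ∩ C x).indicator (fun _ => -(1/fθ) * (1 / e x)) ω
          + (B ∩ C x).indicator (fun _ => (1/fθ) * (G x / e x)) ω
          + (C x).indicator (fun _ => -(1/fθ) * (G x - q)) ω) ∂P
      = (P (A ∩ B ∩ C x)).toReal * (-(1/fθ) * (1 / e x))
        + (P (B ∩ C x)).toReal * ((1/fθ) * (G x / e x))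
        + (P (C x)).toReal * (-(1/fθ) * (G x - q)) := by
    intro x
    rw [int_three P _ _ _ (hint _ ((hAm.inter hBm).inter (hCm x)) _)
          (hint _ (hBm.inter (hCm x)) _) (hint _ (hCm x) _),
        integral_indicator_const _ ((hAm.inter hBm).inter (hCm x)),
        integral_indicator_const _ (hBm.inter (hCm x)),
        integral_indicator_const _ (hCm x), smul_eq_mul, smul_eq_mul, smul_eq_mul,
        measureReal_def, measureReal_def, measureReal_def]
  rw [Finset.sum_congr rfl fun x _ => hsplit x]
  have hterm : ∀ x : α,
      (P (A ∩ B ∩ C x)).toReal * (-(1/fθ) * (1 / e x))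
        + (P (B ∩ C x)).toReal * ((1/fθ) * (G x / e x))
        + (P (C x)).toReal * (-(1/fθ) * (G x - q))
      = (1/fθ) * q * (P (C x)).toReal - (1/fθ) * (G₀ x * (P (C x)).toReal) := by
    intro x
    by_cases hp : P (C x) = 0
    · have ha : P (A ∩ B ∩ C x) = 0 := measure_mono_null Set.inter_subset_right hp
      have hb : P (B ∩ C x) = 0 := measure_mono_null Set.inter_subset_right hp
      simp [ha, hb, hp]
    · have hb0 : P (B ∩ C x) ≠ 0 := hpos x hp
      have hbr : (P (B ∩ C x)).toReal ≠ 0 :=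
        ENNReal.toReal_ne_zero.mpr ⟨hb0, measure_ne_top _ _⟩
      have hpr : (P (C x)).toReal ≠ 0 :=
        ENNReal.toReal_ne_zero.mpr ⟨hp, measure_ne_top _ _⟩
      have hG0x : G₀ x = (P (A ∩ B ∩ C x)).toReal / (P (B ∩ C x)).toReal := hG₀ x
      have hex : e x ≠ 0 := (he x).1.ne'
      rcases hDR with hDRG | hDRe
      · rw [hDRG x hp, hG0x]
        field_simp
        ring
      · have hex0 : e x = (P (B ∩ C x)).toReal / (P (C x)).toReal := by
          rw [hDRe x hp, he₀ x]
        rw [hex0, hG0x]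
        field_simp
        ring
  rw [Finset.sum_congr rfl fun x _ => hterm x, Finset.sum_sub_distrib,
      ← Finset.mul_sum, ← Finset.mul_sum, hθ₀]
  have hsum1 : ∑ x : α, (P (C x)).toReal = 1 := by
    have h1 : ∑ x : α, P (C x) = P Set.univ := by
      have := sum_measure_preimage_singleton (μ := P) (Finset.univ : Finset α)
        (f := X) (fun y _ => hX (measurableSet_singleton y))
      simpa [hC_def, Set.preimage, Set.mem_singleton_iff] using this
    rw [← ENNReal.toReal_sum (fun a _ => measure_ne_top _ _), h1, measure_univ,
      ENNReal.toReal_one]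
  rw [hsum1]
  ring
end

section
/- For the efficient influence function D_{η,θ}(Z) = -(1/f(θ))·[ (M/e(X))·(1_{Y ≤ θ} - G(θ|1,X)) + G(θ|1,X) - q ], the bias admits the exact representation E₀[D_{η,θ}] = -(1/f(θ))·E₀[ (e₀(X)/e(X) - 1)·(G₀(θ|1,X) - G(θ|1,X)) + (G₀(θ|1,X) - q) ]. -/
open MeasureTheory

/-- Exact representation of the bias of the efficient influence function:
`E₀[D_{η,θ}] = -(1/f(θ))·E₀[(e₀/e - 1)(G₀ - G) + (G₀ - q)]`. -/
theorem stmt2 {Ω α : Type*} [MeasurableSpace Ω] [Fintype α] [MeasurableSpace α]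
    [MeasurableSingletonClass α]
    (P : Measure Ω) [IsProbabilityMeasure P]
    (X : Ω → α) (M : Ω → ℕ) (Y : Ω → ℝ)
    (hX : Measurable X) (hM : Measurable M) (hY : Measurable Y)
    (θ q fθ : ℝ) (hf : 0 < fθ)
    (e : α → ℝ) (G : α → ℝ)
    (he : ∀ x, e x ∈ Set.Ioc (0 : ℝ) 1) (hG : ∀ x, G x ∈ Set.Icc (0 : ℝ) 1)
    (e₀ G₀ : α → ℝ)
    (he₀ : ∀ x, e₀ x = (P ({ω | M ω = 1} ∩ {ω | X ω = x})).toReal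
                        / (P {ω | X ω = x}).toReal)
    (hG₀ : ∀ x, G₀ x = (P ({ω | Y ω ≤ θ} ∩ {ω | M ω = 1} ∩ {ω | X ω = x})).toReal
                        / (P ({ω | M ω = 1} ∩ {ω | X ω = x})).toReal)
    -- conditional independence  Y ⟂ M ∣ X  (for the event {Y ≤ θ}):
    (hCI : ∀ x : α,
      P ({ω | Y ω ≤ θ} ∩ {ω | M ω = 1} ∩ {ω | X ω = x}) * P {ω | X ω = x}
        = P ({ω | Y ω ≤ θ} ∩ {ω | X ω = x}) * P ({ω | M ω = 1} ∩ {ω | X ω = x}))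
    -- positivity:
    (hpos : ∀ x : α, P {ω | X ω = x} ≠ 0 → P ({ω | M ω = 1} ∩ {ω | X ω = x}) ≠ 0) :
    ∫ ω, -(1 / fθ)
        * ((Set.indicator {ω' | M ω' = 1} (fun _ => (1 : ℝ)) ω / e (X ω))
              * (Set.indicator {ω' | Y ω' ≤ θ} (fun _ => (1 : ℝ)) ω - G (X ω))
            + G (X ω) - q) ∂P
      = -(1 / fθ)
          * ∑ x : α, ((e₀ x / e x - 1) * (G₀ x - G x) + (G₀ x - q))
              * (P {ω | X ω = x}).toReal := by
  classical
  set SM : Set Ω := {ω | M ω = 1} with hSMdef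
  set SY : Set Ω := {ω | Y ω ≤ θ} with hSYdef
  set S : α → Set Ω := fun x => {ω | X ω = x} with hSdef
  have hSMm : MeasurableSet SM := hM (measurableSet_singleton 1)
  have hSYm : MeasurableSet SY := hY measurableSet_Iic
  have hSm : ∀ x, MeasurableSet (S x) := fun x => hX (measurableSet_singleton x)
  set A : α → ℝ := fun x => -(1 / fθ) / e x with hA
  set B : α → ℝ := fun x => (1 / fθ) * G x / e x with hB
  set C : α → ℝ := fun x => -(1 / fθ) * (G x - q) with hC
  set ι : Set Ω → Ω → ℝ := fun s => Set.indicator s (fun _ => (1 : ℝ)) with hιdef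
  have hpt : ∀ ω, -(1 / fθ)
        * ((ι SM ω / e (X ω)) * (ι SY ω - G (X ω)) + G (X ω) - q)
      = ∑ x : α, (A x * ι (SY ∩ SM ∩ S x) ω + B x * ι (SM ∩ S x) ω + C x * ι (S x) ω) := by
    intro ω
    rw [Finset.sum_eq_single (X ω)]
    · have hmem : ω ∈ S (X ω) := rfl
      have henz : e (X ω) ≠ 0 := ne_of_gt (he (X ω)).1
      by_cases hm : ω ∈ SM <;> by_cases hy : ω ∈ SY <;>
        simp only [hιdef, hA, hB, hC, Set.indicator_apply, Set.mem_inter_iff, hmem, hm, hy,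
          and_true, and_false, true_and, false_and, if_true, if_false] <;>
        field_simp <;> ring
    · intro x _ hx
      have hnot : ω ∉ S x := fun h => hx h.symm
      simp only [hιdef, Set.indicator_apply, Set.mem_inter_iff, hnot, and_false, if_false,
        mul_zero, add_zero, zero_add]
    · intro h; exact absurd (Finset.mem_univ _) h
  have hIntι : ∀ s : Set Ω, MeasurableSet s → Integrable (ι s) P := fun s hs =>
    (integrable_const (1 : ℝ)).indicator hs
  calc
    ∫ ω, -(1 / fθ)
        * ((ι SM ω / e (X ω)) * (ι SY ω - G (X ω)) + G (X ω) - q) ∂P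
      = ∫ ω, ∑ x : α,
          (A x * ι (SY ∩ SM ∩ S x) ω + B x * ι (SM ∩ S x) ω + C x * ι (S x) ω) ∂P :=
        integral_congr_ae (Filter.Eventually.of_forall hpt)
    _ = ∑ x : α, ∫ ω,
          (A x * ι (SY ∩ SM ∩ S x) ω + B x * ι (SM ∩ S x) ω + C x * ι (S x) ω) ∂P := by
        refine integral_finset_sum _ (fun x _ => ?_)
        exact (((hIntι _ ((hSYm.inter hSMm).inter (hSm x))).const_mul _).add
          ((hIntι _ (hSMm.inter (hSm x))).const_mul _)).add
          ((hIntι _ (hSm x)).const_mul _)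
    _ = ∑ x : α, (A x * (P (SY ∩ SM ∩ S x)).toReal + B x * (P (SM ∩ S x)).toReal
          + C x * (P (S x)).toReal) := by
        refine Finset.sum_congr rfl (fun x _ => ?_)
        have hI1 : Integrable (fun ω => A x * ι (SY ∩ SM ∩ S x) ω) P :=
          (hIntι _ ((hSYm.inter hSMm).inter (hSm x))).const_mul _
        have hI2 : Integrable (fun ω => B x * ι (SM ∩ S x) ω) P :=
          (hIntι _ (hSMm.inter (hSm x))).const_mul _
        have hI3 : Integrable (fun ω => C x * ι (S x) ω) P :=
          (hIntι _ (hSm x)).const_mul _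
        have hI12 : Integrable (fun ω => A x * ι (SY ∩ SM ∩ S x) ω
            + B x * ι (SM ∩ S x) ω) P := hI1.add hI2
        have hval : ∀ s : Set Ω, MeasurableSet s → ∫ a, ι s a ∂P = (P s).toReal :=
          fun s hs => integral_indicator_one hs
        rw [integral_add hI12 hI3, integral_add hI1 hI2,
          integral_const_mul, integral_const_mul, integral_const_mul,
          hval _ ((hSYm.inter hSMm).inter (hSm x)),
          hval _ (hSMm.inter (hSm x)), hval _ (hSm x)]
    _ = -(1 / fθ) * ∑ x : α, ((e₀ x / e x - 1) * (G₀ x - G x) + (G₀ x - q))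
          * (P (S x)).toReal := by
        rw [Finset.mul_sum]
        refine Finset.sum_congr rfl (fun x _ => ?_)
        have henz : e x ≠ 0 := ne_of_gt (he x).1
        by_cases hx : P (S x) = 0
        · have h2 : P (SM ∩ S x) = 0 := measure_mono_null Set.inter_subset_right hx
          have h3 : P (SY ∩ SM ∩ S x) = 0 :=
            measure_mono_null Set.inter_subset_right hx
          simp [hA, hB, hC, hx, h2, h3]
        · have h2 : P (SM ∩ S x) ≠ 0 := hpos x hx
          have hxt : (P (S x)).toReal ≠ 0 :=
            fun h => hx (by simpa [ENNReal.toReal_eq_zero_iff, measure_ne_top] using h)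
          have h2t : (P (SM ∩ S x)).toReal ≠ 0 :=
            fun h => h2 (by simpa [ENNReal.toReal_eq_zero_iff, measure_ne_top] using h)
          rw [he₀ x, hG₀ x]
          have hSx : {ω | X ω = x} = S x := rfl
          simp only [hA, hB, hC, ← hSMdef, ← hSYdef, ← hSdef, hSx]
          field_simp
          ring
end

section
/- Second-order remainder bound via Cauchy–Schwarz: with h_θ(x) = G(θ|1,x), h_{0,θ}(x) = G₀(θ|1,x), and θ₀ the true quantile (so E₀[G₀(θ₀|1,X)] = q), one has |E₀[D_{η,θ₀}]| ≤ C · ‖h_{θ₀} - h_{0,θ₀}‖ · ‖e - e₀‖, where ‖·‖ denotes the L²(P₀) norm and C = 1/(f(θ₀) · inf_x e(x)), provided inf_x e(x) > 0 and inf_x e₀ is bounded. -/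
open MeasureTheory

/-- Second-order remainder bound via Cauchy–Schwarz:
`|E₀[D_{η,θ₀}]| ≤ C·‖h_{θ₀} - h_{0,θ₀}‖·‖e - e₀‖` with
`C = 1/(f(θ₀)·inf_x e(x))`, the norms being `L²(P₀)` norms over the
distribution of `X`. -/
theorem stmt3 {Ω α : Type*} [MeasurableSpace Ω] [Fintype α] [MeasurableSpace α]
    [MeasurableSingletonClass α]
    (P : Measure Ω) [IsProbabilityMeasure P]
    (X : Ω → α) (M : Ω → ℕ) (Y : Ω → ℝ)
    (hX : Measurable X) (hM : Measurable M) (hY : Measurable Y)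
    (θ₀ q fθ : ℝ) (hf : 0 < fθ)
    (e : α → ℝ) (G : α → ℝ)
    (he : ∀ x, e x ∈ Set.Ioc (0 : ℝ) 1) (hG : ∀ x, G x ∈ Set.Icc (0 : ℝ) 1)
    -- a positive lower bound for e (inf_x e(x) > 0):
    (ε : ℝ) (hε : 0 < ε) (heinf : ∀ x, ε ≤ e x)
    (e₀ G₀ : α → ℝ)
    (he₀ : ∀ x, e₀ x = (P ({ω | M ω = 1} ∩ {ω | X ω = x})).toReal
                        / (P {ω | X ω = x}).toReal)
    (hG₀ : ∀ x, G₀ x = (P ({ω | Y ω ≤ θ₀} ∩ {ω | M ω = 1} ∩ {ω | X ω = x})).toReal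
                        / (P ({ω | M ω = 1} ∩ {ω | X ω = x})).toReal)
    -- conditional independence  Y ⟂ M ∣ X  (for the event {Y ≤ θ₀}):
    (hCI : ∀ x : α,
      P ({ω | Y ω ≤ θ₀} ∩ {ω | M ω = 1} ∩ {ω | X ω = x}) * P {ω | X ω = x}
        = P ({ω | Y ω ≤ θ₀} ∩ {ω | X ω = x}) * P ({ω | M ω = 1} ∩ {ω | X ω = x}))
    -- positivity:
    (hpos : ∀ x : α, P {ω | X ω = x} ≠ 0 → P ({ω | M ω = 1} ∩ {ω | X ω = x}) ≠ 0)
    -- θ₀ is the true q-th quantile:  F₀(θ₀) = E₀[G₀(θ₀|1,X)] = q :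
    (hθ₀ : ∑ x : α, G₀ x * (P {ω | X ω = x}).toReal = q) :
    |∫ ω, -(1 / fθ)
        * ((Set.indicator {ω' | M ω' = 1} (fun _ => (1 : ℝ)) ω / e (X ω))
              * (Set.indicator {ω' | Y ω' ≤ θ₀} (fun _ => (1 : ℝ)) ω - G (X ω))
            + G (X ω) - q) ∂P|
      ≤ (1 / (fθ * ε))
          * Real.sqrt (∑ x : α, (G x - G₀ x) ^ 2 * (P {ω | X ω = x}).toReal)
          * Real.sqrt (∑ x : α, (e x - e₀ x) ^ 2 * (P {ω | X ω = x}).toReal) := by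
  classical
  have hfθ : fθ ≠ 0 := ne_of_gt hf
  have hene : ∀ x, e x ≠ 0 := fun x => (he x).1.ne'
  set A : α → Set Ω := fun x => {ω | X ω = x} with hA
  set B : Set Ω := {ω | M ω = 1} with hB
  set C : Set Ω := {ω | Y ω ≤ θ₀} with hC
  have hAm : ∀ x, MeasurableSet (A x) := fun x => hX (measurableSet_singleton x)
  have hBm : MeasurableSet B := hM (measurableSet_singleton 1)
  have hCm : MeasurableSet C := measurableSet_le hY measurable_const
  set p : α → ℝ := fun x => (P (A x)).toReal with hp
  set pm : α → ℝ := fun x => (P (B ∩ A x)).toReal with hpm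
  set pym : α → ℝ := fun x => (P (C ∩ B ∩ A x)).toReal with hpym
  have hpnn : ∀ x, 0 ≤ p x := fun x => ENNReal.toReal_nonneg
  set c₁ : α → ℝ := fun x => -(1 / fθ) * (1 / e x) with hc₁
  set c₂ : α → ℝ := fun x => (1 / fθ) * (G x / e x) with hc₂
  set c₃ : α → ℝ := fun x => -(1 / fθ) * (G x - q) with hc₃
  -- pointwise decomposition of the integrand
  have hdecomp : ∀ ω : Ω,
      -(1 / fθ) * ((Set.indicator {ω' | M ω' = 1} (fun _ => (1 : ℝ)) ω / e (X ω))
            * (Set.indicator {ω' | Y ω' ≤ θ₀} (fun _ => (1 : ℝ)) ω - G (X ω))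
          + G (X ω) - q)
        = ∑ x : α, ((C ∩ B ∩ A x).indicator (fun _ => c₁ x) ω
            + (B ∩ A x).indicator (fun _ => c₂ x) ω
            + (A x).indicator (fun _ => c₃ x) ω) := by
    intro ω
    have hωA : ω ∈ A (X ω) := rfl
    rw [Finset.sum_eq_single (X ω)]
    · by_cases hMω : M ω = 1 <;> by_cases hYω : Y ω ≤ θ₀
      · rw [Set.indicator_of_mem (show ω ∈ {ω' | M ω' = 1} from hMω) (fun _ => (1:ℝ)),
          Set.indicator_of_mem (show ω ∈ {ω' | Y ω' ≤ θ₀} from hYω) (fun _ => (1:ℝ)),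
          Set.indicator_of_mem (s := C ∩ B ∩ A (X ω)) (a := ω) ⟨⟨hYω, hMω⟩, hωA⟩,
          Set.indicator_of_mem (s := B ∩ A (X ω)) (a := ω) ⟨hMω, hωA⟩,
          Set.indicator_of_mem (s := A (X ω)) (a := ω) hωA]
        simp only [hc₁, hc₂, hc₃]
        ring
      · rw [Set.indicator_of_mem (show ω ∈ {ω' | M ω' = 1} from hMω) (fun _ => (1:ℝ)),
          Set.indicator_of_notMem (show ω ∉ {ω' | Y ω' ≤ θ₀} from hYω) (fun _ => (1:ℝ)),
          Set.indicator_of_notMem (s := C ∩ B ∩ A (X ω)) (a := ω) (fun h => hYω h.1.1),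
          Set.indicator_of_mem (s := B ∩ A (X ω)) (a := ω) ⟨hMω, hωA⟩,
          Set.indicator_of_mem (s := A (X ω)) (a := ω) hωA]
        simp only [hc₁, hc₂, hc₃]
        ring
      · rw [Set.indicator_of_notMem (show ω ∉ {ω' | M ω' = 1} from hMω) (fun _ => (1:ℝ)),
          Set.indicator_of_mem (show ω ∈ {ω' | Y ω' ≤ θ₀} from hYω) (fun _ => (1:ℝ)),
          Set.indicator_of_notMem (s := C ∩ B ∩ A (X ω)) (a := ω) (fun h => hMω h.1.2),
          Set.indicator_of_notMem (s := B ∩ A (X ω)) (a := ω) (fun h => hMω h.1),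
          Set.indicator_of_mem (s := A (X ω)) (a := ω) hωA]
        simp only [hc₁, hc₂, hc₃]
        ring
      · rw [Set.indicator_of_notMem (show ω ∉ {ω' | M ω' = 1} from hMω) (fun _ => (1:ℝ)),
          Set.indicator_of_notMem (show ω ∉ {ω' | Y ω' ≤ θ₀} from hYω) (fun _ => (1:ℝ)),
          Set.indicator_of_notMem (s := C ∩ B ∩ A (X ω)) (a := ω) (fun h => hMω h.1.2),
          Set.indicator_of_notMem (s := B ∩ A (X ω)) (a := ω) (fun h => hMω h.1),
          Set.indicator_of_mem (s := A (X ω)) (a := ω) hωA]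
        simp only [hc₁, hc₂, hc₃]
        ring
    · intro x _ hx
      have hωA : ω ∉ A x := fun h => hx (h.symm)
      have h1 : ω ∉ C ∩ B ∩ A x := fun h => hωA h.2
      have h2 : ω ∉ B ∩ A x := fun h => hωA h.2
      rw [Set.indicator_of_notMem h1, Set.indicator_of_notMem h2,
        Set.indicator_of_notMem hωA]
      ring
    · intro h; exact absurd (Finset.mem_univ _) h
  -- the value of the integral
  set S : ℝ := ∑ x : α, (G x - G₀ x) * (e x - e₀ x) / e x * p x with hS
  have hint1 : ∀ x : α, Integrable ((C ∩ B ∩ A x).indicator (fun _ => c₁ x)) P :=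
    fun x => (integrable_const _).indicator ((hCm.inter hBm).inter (hAm x))
  have hint2 : ∀ x : α, Integrable ((B ∩ A x).indicator (fun _ => c₂ x)) P :=
    fun x => (integrable_const _).indicator (hBm.inter (hAm x))
  have hint3 : ∀ x : α, Integrable ((A x).indicator (fun _ => c₃ x)) P :=
    fun x => (integrable_const _).indicator (hAm x)
  have hsum1 : ∑ x : α, p x = 1 := by
    have h1 : ∑ x : α, P (A x) = P Set.univ := by
      have := sum_measure_preimage_singleton (μ := P) (Finset.univ : Finset α)
        (f := X) (fun y _ => hX (measurableSet_singleton y))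
      simpa [hA, Set.preimage] using this
    have h2 : ∑ x : α, p x = (∑ x : α, P (A x)).toReal := by
      rw [ENNReal.toReal_sum (fun a _ => measure_ne_top P _)]
    rw [h2, h1, measure_univ, ENNReal.toReal_one]
  have key : (∫ ω, -(1 / fθ)
        * ((Set.indicator {ω' | M ω' = 1} (fun _ => (1 : ℝ)) ω / e (X ω))
              * (Set.indicator {ω' | Y ω' ≤ θ₀} (fun _ => (1 : ℝ)) ω - G (X ω))
            + G (X ω) - q) ∂P) = -(1 / fθ) * S := by
    have step1 : (∫ ω, -(1 / fθ)
        * ((Set.indicator {ω' | M ω' = 1} (fun _ => (1 : ℝ)) ω / e (X ω))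
              * (Set.indicator {ω' | Y ω' ≤ θ₀} (fun _ => (1 : ℝ)) ω - G (X ω))
            + G (X ω) - q) ∂P)
        = ∑ x : α, (c₁ x * pym x + c₂ x * pm x + c₃ x * p x) := by
      simp_rw [hdecomp]
      rw [integral_finset_sum (f := fun x ω => (C ∩ B ∩ A x).indicator (fun _ => c₁ x) ω
            + (B ∩ A x).indicator (fun _ => c₂ x) ω + (A x).indicator (fun _ => c₃ x) ω)
          Finset.univ (fun x _ => ((hint1 x).add (hint2 x)).add (hint3 x))]
      refine Finset.sum_congr rfl fun x _ => ?_
      have h12 : Integrable (fun ω => (C ∩ B ∩ A x).indicator (fun _ => c₁ x) ω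
          + (B ∩ A x).indicator (fun _ => c₂ x) ω) P := (hint1 x).add (hint2 x)
      rw [integral_add h12 (hint3 x),
        integral_add (hint1 x) (hint2 x),
        integral_indicator_const _ ((hCm.inter hBm).inter (hAm x)),
        integral_indicator_const _ (hBm.inter (hAm x)),
        integral_indicator_const _ (hAm x)]
      simp [hpym, hpm, hp, mul_comm, Measure.real]
    have step2 : ∀ x : α, c₁ x * pym x + c₂ x * pm x + c₃ x * p x
        = -(1 / fθ) * ((G x - G₀ x) * (e x - e₀ x) / e x * p x + (G₀ x - q) * p x) := by
      intro x
      by_cases hpx : P (A x) = 0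
      · have h0 : p x = 0 := by simp [hp, hpx]
        have hm0 : pm x = 0 := by
          simp [hpm, measure_mono_null Set.inter_subset_right hpx]
        have hym0 : pym x = 0 := by
          simp [hpym, measure_mono_null Set.inter_subset_right hpx]
        rw [h0, hm0, hym0]; ring
      · have hpxr : p x ≠ 0 :=
          ENNReal.toReal_ne_zero.mpr ⟨hpx, measure_ne_top P _⟩
        have hpmx : P (B ∩ A x) ≠ 0 := hpos x hpx
        have hpmr : pm x ≠ 0 :=
          ENNReal.toReal_ne_zero.mpr ⟨hpmx, measure_ne_top P _⟩
        have hpm_eq : pm x = e₀ x * p x := by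
          rw [he₀ x]; exact (div_mul_cancel₀ _ hpxr).symm
        have hpym_eq : pym x = G₀ x * pm x := by
          rw [hG₀ x]; exact (div_mul_cancel₀ _ hpmr).symm
        rw [hpym_eq, hpm_eq, hc₁, hc₂, hc₃]
        have hex := hene x
        field_simp
        ring
    rw [step1]
    have hθ₀' : ∑ x : α, G₀ x * p x = q := hθ₀
    calc ∑ x : α, (c₁ x * pym x + c₂ x * pm x + c₃ x * p x)
        = ∑ x : α, -(1 / fθ) * ((G x - G₀ x) * (e x - e₀ x) / e x * p x
            + (G₀ x - q) * p x) := Finset.sum_congr rfl fun x _ => step2 x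
      _ = -(1 / fθ) * ∑ x : α, ((G x - G₀ x) * (e x - e₀ x) / e x * p x
            + (G₀ x - q) * p x) := by rw [← Finset.mul_sum]
      _ = -(1 / fθ) * (S + ((∑ x : α, G₀ x * p x) - q * ∑ x : α, p x)) := by
          congr 1
          rw [hS, Finset.sum_add_distrib]
          congr 1
          rw [Finset.mul_sum, ← Finset.sum_sub_distrib]
          exact Finset.sum_congr rfl fun x _ => by ring
      _ = -(1 / fθ) * S := by rw [hθ₀', hsum1]; ring
  rw [key]
  -- now the Cauchy–Schwarz estimate
  set u : α → ℝ := fun x => |G x - G₀ x| * Real.sqrt (p x) with hu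
  set v : α → ℝ := fun x => |e x - e₀ x| * Real.sqrt (p x) with hv
  have hSu : ∑ x : α, u x ^ 2 = ∑ x : α, (G x - G₀ x) ^ 2 * p x :=
    Finset.sum_congr rfl fun x _ => by
      rw [hu, mul_pow, sq_abs, Real.sq_sqrt (hpnn x)]
  have hSv : ∑ x : α, v x ^ 2 = ∑ x : α, (e x - e₀ x) ^ 2 * p x :=
    Finset.sum_congr rfl fun x _ => by
      rw [hv, mul_pow, sq_abs, Real.sq_sqrt (hpnn x)]
  have huv : ∀ x, 0 ≤ u x * v x := fun x =>
    mul_nonneg (mul_nonneg (abs_nonneg _) (Real.sqrt_nonneg _))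
      (mul_nonneg (abs_nonneg _) (Real.sqrt_nonneg _))
  have hCS : ∑ x : α, u x * v x
      ≤ Real.sqrt (∑ x : α, u x ^ 2) * Real.sqrt (∑ x : α, v x ^ 2) := by
    have h1 := Finset.sum_mul_sq_le_sq_mul_sq Finset.univ u v
    have h2 : (0 : ℝ) ≤ ∑ x : α, u x * v x := Finset.sum_nonneg fun x _ => huv x
    calc ∑ x : α, u x * v x = Real.sqrt ((∑ x : α, u x * v x) ^ 2) := by
          rw [Real.sqrt_sq h2]
      _ ≤ Real.sqrt ((∑ x : α, u x ^ 2) * ∑ x : α, v x ^ 2) := Real.sqrt_le_sqrt h1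
      _ = Real.sqrt (∑ x : α, u x ^ 2) * Real.sqrt (∑ x : α, v x ^ 2) :=
          Real.sqrt_mul (Finset.sum_nonneg fun x _ => sq_nonneg _) _
  have hSbound : |S| ≤ (1 / ε) * (Real.sqrt (∑ x : α, u x ^ 2)
      * Real.sqrt (∑ x : α, v x ^ 2)) := by
    calc |S| ≤ ∑ x : α, |(G x - G₀ x) * (e x - e₀ x) / e x * p x| :=
          Finset.abs_sum_le_sum_abs _ _
      _ ≤ ∑ x : α, (1 / ε) * (u x * v x) := by
          refine Finset.sum_le_sum fun x _ => ?_
          have hterm : |(G x - G₀ x) * (e x - e₀ x) / e x * p x|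
              = |G x - G₀ x| * |e x - e₀ x| * (1 / e x) * p x := by
            rw [abs_mul, abs_div, abs_mul, abs_of_nonneg (hpnn x),
              abs_of_pos (he x).1]
            ring
          rw [hterm, hu, hv]
          have hsq : Real.sqrt (p x) * Real.sqrt (p x) = p x :=
            Real.mul_self_sqrt (hpnn x)
          have h1e : 1 / e x ≤ 1 / ε := one_div_le_one_div_of_le hε (heinf x)
          calc |G x - G₀ x| * |e x - e₀ x| * (1 / e x) * p x
              ≤ |G x - G₀ x| * |e x - e₀ x| * (1 / ε) * p x := by
                apply mul_le_mul_of_nonneg_right _ (hpnn x)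
                exact mul_le_mul_of_nonneg_left h1e
                  (mul_nonneg (abs_nonneg _) (abs_nonneg _))
            _ = (1 / ε) * (|G x - G₀ x| * Real.sqrt (p x)
                  * (|e x - e₀ x| * Real.sqrt (p x))) := by
                rw [show |G x - G₀ x| * Real.sqrt (p x) * (|e x - e₀ x| * Real.sqrt (p x))
                    = |G x - G₀ x| * |e x - e₀ x| * (Real.sqrt (p x) * Real.sqrt (p x)) by
                  ring, hsq]
                ring
      _ = (1 / ε) * ∑ x : α, u x * v x := by rw [← Finset.mul_sum]
      _ ≤ (1 / ε) * (Real.sqrt (∑ x : α, u x ^ 2) * Real.sqrt (∑ x : α, v x ^ 2)) :=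
          mul_le_mul_of_nonneg_left hCS (by positivity)
  rw [hSu, hSv] at hSbound
  rw [abs_mul, abs_neg, abs_of_pos (by positivity : (0:ℝ) < 1 / fθ)]
  calc 1 / fθ * |S|
      ≤ 1 / fθ * ((1 / ε) * (Real.sqrt (∑ x : α, (G x - G₀ x) ^ 2 * p x)
          * Real.sqrt (∑ x : α, (e x - e₀ x) ^ 2 * p x))) :=
        mul_le_mul_of_nonneg_left hSbound (by positivity)
    _ = (1 / (fθ * ε)) * Real.sqrt (∑ x : α, (G x - G₀ x) ^ 2 * p x)
          * Real.sqrt (∑ x : α, (e x - e₀ x) ^ 2 * p x) := by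
        field_simp
end

section
/- Identification of the counterfactual distribution among the treated: under T ⟂ Y₀ | X and e(x) = P(T=1|X=x) < 1 almost everywhere, the distribution F(y) = P(Y₀ ≤ y | T=1) equals Σ_x P(Y ≤ y | T=0, X=x) · P(X=x | T=1), where Y = Y_T is the observed outcome. -/
open MeasureTheory

/-- Identification of the counterfactual distribution among the treated:
under `T ⟂ Y₀ | X` and positivity `P(T=1|X=x) < 1`, with `P(T=1) > 0`,
`P(Y₀ ≤ y | T=1) = ∑ x, P(Y ≤ y | T=0, X=x) · P(X=x | T=1)`. -/
theorem stmt11 {Ω α : Type*} [MeasurableSpace Ω] [Fintype α] [MeasurableSpace α]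
    [MeasurableSingletonClass α]
    (P : Measure Ω) [IsProbabilityMeasure P]
    (X : Ω → α) (T : Ω → ℕ) (Y₀ Y₁ Y : Ω → ℝ)
    (hX : Measurable X) (hT : Measurable T) (hY₀ : Measurable Y₀)
    (hT01 : ∀ ω, T ω = 0 ∨ T ω = 1)
    -- observed outcome  Y = T·Y₁ + (1-T)·Y₀ :
    (hY : ∀ ω, Y ω = if T ω = 1 then Y₁ ω else Y₀ ω)
    -- ignorability  T ⟂ Y₀ ∣ X  (for the events {Y₀ ≤ y}):
    (hCI : ∀ (y : ℝ) (x : α),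
      P ({ω | Y₀ ω ≤ y} ∩ {ω | T ω = 1} ∩ {ω | X ω = x})
          * P ({ω | T ω = 0} ∩ {ω | X ω = x})
        = P ({ω | Y₀ ω ≤ y} ∩ {ω | T ω = 0} ∩ {ω | X ω = x})
            * P ({ω | T ω = 1} ∩ {ω | X ω = x}))
    -- positivity  P(T=1|X=x) < 1, i.e. P(T=0, X=x) > 0 on the support of X:
    (hpos : ∀ x : α, P {ω | X ω = x} ≠ 0 → P ({ω | T ω = 0} ∩ {ω | X ω = x}) ≠ 0)
    (hT1 : P {ω | T ω = 1} ≠ 0)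
    (y : ℝ) :
    (P ({ω | Y₀ ω ≤ y} ∩ {ω | T ω = 1})).toReal / (P {ω | T ω = 1}).toReal
      = ∑ x : α,
          (P ({ω | Y ω ≤ y} ∩ {ω | T ω = 0} ∩ {ω | X ω = x})).toReal
              / (P ({ω | T ω = 0} ∩ {ω | X ω = x})).toReal
            * ((P ({ω | X ω = x} ∩ {ω | T ω = 1})).toReal
                / (P {ω | T ω = 1}).toReal) := by
  classical
  -- replace Y by Y₀ on {T = 0}
  have hYY : ∀ x : α, {ω | Y ω ≤ y} ∩ {ω | T ω = 0} ∩ {ω | X ω = x}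
      = {ω | Y₀ ω ≤ y} ∩ {ω | T ω = 0} ∩ {ω | X ω = x} := by
    intro x
    ext ω
    simp only [Set.mem_inter_iff, Set.mem_setOf_eq]
    constructor
    · rintro ⟨⟨h1, h2⟩, h3⟩
      rw [hY ω, if_neg (by omega)] at h1
      exact ⟨⟨h1, h2⟩, h3⟩
    · rintro ⟨⟨h1, h2⟩, h3⟩
      rw [hY ω, if_neg (by omega)]
      exact ⟨⟨h1, h2⟩, h3⟩
  -- partition of the LHS numerator
  have hpart : P ({ω | Y₀ ω ≤ y} ∩ {ω | T ω = 1})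
      = ∑ x : α, P ({ω | Y₀ ω ≤ y} ∩ {ω | T ω = 1} ∩ {ω | X ω = x}) := by
    conv_lhs => rw [show {ω | Y₀ ω ≤ y} ∩ {ω | T ω = 1}
        = ⋃ x : α, ({ω | Y₀ ω ≤ y} ∩ {ω | T ω = 1} ∩ {ω | X ω = x}) by
      ext ω; simp [Set.mem_iUnion]]
    have hm : ∀ x : α, MeasurableSet ({ω | Y₀ ω ≤ y} ∩ {ω | T ω = 1} ∩ {ω | X ω = x}) :=
      fun x => ((hY₀ measurableSet_Iic).inter (hT (measurableSet_singleton 1))).inter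
        (hX (measurableSet_singleton x))
    have hd : Pairwise (Function.onFun Disjoint
        fun x : α => {ω | Y₀ ω ≤ y} ∩ {ω | T ω = 1} ∩ {ω | X ω = x}) := by
      intro i j hij
      apply Set.disjoint_left.2
      rintro ω ⟨_, (h1 : X ω = i)⟩ ⟨_, (h2 : X ω = j)⟩
      exact hij (h1 ▸ h2 ▸ rfl)
    rw [measure_iUnion hd hm, tsum_fintype]
  rw [hpart, ENNReal.toReal_sum (fun x _ => measure_ne_top P _), Finset.sum_div]
  apply Finset.sum_congr rfl
  intro x _
  rw [hYY x]
  set A := P ({ω | Y₀ ω ≤ y} ∩ {ω | T ω = 1} ∩ {ω | X ω = x}) with hA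
  set B := P ({ω | T ω = 0} ∩ {ω | X ω = x}) with hB
  set C := P ({ω | Y₀ ω ≤ y} ∩ {ω | T ω = 0} ∩ {ω | X ω = x}) with hC
  have hD : P ({ω | X ω = x} ∩ {ω | T ω = 1}) = P ({ω | T ω = 1} ∩ {ω | X ω = x}) := by
    rw [Set.inter_comm]
  rw [hD]
  set D := P ({ω | T ω = 1} ∩ {ω | X ω = x}) with hDdef
  by_cases hx : P {ω | X ω = x} = 0
  · have hA0 : A = 0 := le_antisymm (le_trans (measure_mono (by
      rintro ω ⟨_, h⟩; exact h)) hx.le) (zero_le ..)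
    have hD0 : D = 0 := le_antisymm (le_trans (measure_mono (by
      rintro ω ⟨_, h⟩; exact h)) hx.le) (zero_le ..)
    rw [hA0, hD0]
    simp
  · have hB0 : B ≠ 0 := hpos x hx
    have hBt : B.toReal ≠ 0 := ENNReal.toReal_ne_zero.2 ⟨hB0, measure_ne_top P _⟩
    have hT1t : (P {ω | T ω = 1}).toReal ≠ 0 :=
      ENNReal.toReal_ne_zero.2 ⟨hT1, measure_ne_top P _⟩
    have hCI' : A.toReal * B.toReal = C.toReal * D.toReal := by
      rw [← ENNReal.toReal_mul, ← ENNReal.toReal_mul, hCI y x]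
    field_simp
    exact hCI'
end

section
/- Double robustness of the treated-quantile influence function: define D_{η,θ}(Z) = -(1/f(θ))·[ ((1-T)/E(T))·(e(X)/(1-e(X)))·(1_{Y≤θ} - G(θ|0,X)) + (T/E(T))·(G(θ|0,X) - q) ]. If either G(·|0,x) equals the true conditional CDF G₀(·|0,x) = P₀(Y ≤ ·|T=0, X=x), or e equals the true propensity e₀(x) = P₀(T=1|X=x), then E₀[D_{η,θ₀}] = 0, where θ₀ satisfies E₀[G₀(θ₀|0,X) | T=1] = q. -/
open MeasureTheory

/-- Double robustness of the treated-quantile influence function: if either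
`G = G₀` or `e = e₀` (on the support of `X`), then `E₀[D_{η,θ₀}] = 0`, where
`θ₀` satisfies `E₀[G₀(θ₀|0,X) | T=1] = q`. -/
theorem stmt12 {Ω α : Type*} [MeasurableSpace Ω] [Fintype α] [MeasurableSpace α]
    [MeasurableSingletonClass α]
    (P : Measure Ω) [IsProbabilityMeasure P]
    (X : Ω → α) (T : Ω → ℕ) (Y₀ Y : Ω → ℝ)
    (hX : Measurable X) (hT : Measurable T) (hYm : Measurable Y)
    (hT01 : ∀ ω, T ω = 0 ∨ T ω = 1)
    -- consistency:  Y = Y₀ on {T = 0}: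
    (hY : ∀ ω, T ω = 0 → Y ω = Y₀ ω)
    (θ₀ q fθ : ℝ) (hf : 0 < fθ) (hq : q ∈ Set.Ioo (0 : ℝ) 1)
    -- candidate nuisances:
    (e : α → ℝ) (G : α → ℝ)
    (he : ∀ x, e x ∈ Set.Ioo (0 : ℝ) 1) (hG : ∀ x, G x ∈ Set.Icc (0 : ℝ) 1)
    -- true nuisances:
    (e₀ G₀ : α → ℝ)
    (he₀ : ∀ x, e₀ x = (P ({ω | T ω = 1} ∩ {ω | X ω = x})).toReal
                        / (P {ω | X ω = x}).toReal)
    (hG₀ : ∀ x, G₀ x = (P ({ω | Y ω ≤ θ₀} ∩ {ω | T ω = 0} ∩ {ω | X ω = x})).toReal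
                        / (P ({ω | T ω = 0} ∩ {ω | X ω = x})).toReal)
    -- ignorability  T ⟂ Y₀ ∣ X  (for the event {Y₀ ≤ θ₀}):
    (hCI : ∀ x : α,
      P ({ω | Y₀ ω ≤ θ₀} ∩ {ω | T ω = 1} ∩ {ω | X ω = x})
          * P ({ω | T ω = 0} ∩ {ω | X ω = x})
        = P ({ω | Y₀ ω ≤ θ₀} ∩ {ω | T ω = 0} ∩ {ω | X ω = x})
            * P ({ω | T ω = 1} ∩ {ω | X ω = x}))
    -- positivity  0 < e₀(x) < 1 on the support of X, and P(T=1) > 0: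
    (hpos0 : ∀ x : α, P {ω | X ω = x} ≠ 0 → P ({ω | T ω = 0} ∩ {ω | X ω = x}) ≠ 0)
    (hpos1 : ∀ x : α, P {ω | X ω = x} ≠ 0 → P ({ω | T ω = 1} ∩ {ω | X ω = x}) ≠ 0)
    (hT1 : P {ω | T ω = 1} ≠ 0)
    -- θ₀ is the q-th quantile of the identified counterfactual CDF:
    (hθ₀ : ∑ x : α, G₀ x * ((P ({ω | X ω = x} ∩ {ω | T ω = 1})).toReal
              / (P {ω | T ω = 1}).toReal) = q)
    -- double robustness hypothesis:
    (hDR : (∀ x : α, P {ω | X ω = x} ≠ 0 → G x = G₀ x)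
           ∨ (∀ x : α, P {ω | X ω = x} ≠ 0 → e x = e₀ x)) :
    ∫ ω, -(1 / fθ)
        * ((Set.indicator {ω' | T ω' = 0} (fun _ => (1 : ℝ)) ω
                / (P {ω' | T ω' = 1}).toReal)
              * (e (X ω) / (1 - e (X ω)))
              * (Set.indicator {ω' | Y ω' ≤ θ₀} (fun _ => (1 : ℝ)) ω - G (X ω))
            + (Set.indicator {ω' | T ω' = 1} (fun _ => (1 : ℝ)) ω
                / (P {ω' | T ω' = 1}).toReal)
              * (G (X ω) - q)) ∂P = 0 := by

  classical
  have mY : MeasurableSet {ω | Y ω ≤ θ₀} := measurableSet_le hYm measurable_const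
  have mT0 : MeasurableSet {ω | T ω = 0} := hT (measurableSet_singleton 0)
  have mT1 : MeasurableSet {ω | T ω = 1} := hT (measurableSet_singleton 1)
  have mX : ∀ x : α, MeasurableSet {ω | X ω = x} := fun x => hX (measurableSet_singleton x)
  set PT1 : ℝ := (P {ω' | T ω' = 1}).toReal with hPT1def
  -- pointwise decomposition of the integrand
  have hfun : (fun ω => -(1 / fθ)
        * ((Set.indicator {ω' | T ω' = 0} (fun _ => (1 : ℝ)) ω / PT1)
              * (e (X ω) / (1 - e (X ω)))
              * (Set.indicator {ω' | Y ω' ≤ θ₀} (fun _ => (1 : ℝ)) ω - G (X ω))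
            + (Set.indicator {ω' | T ω' = 1} (fun _ => (1 : ℝ)) ω / PT1)
              * (G (X ω) - q)))
      = fun ω => ∑ x : α,
          (({ω' | Y ω' ≤ θ₀} ∩ {ω' | T ω' = 0} ∩ {ω' | X ω' = x}).indicator
              (fun _ => -(1 / fθ) * (1 / PT1 * (e x / (1 - e x)))) ω
           + ({ω' | T ω' = 0} ∩ {ω' | X ω' = x}).indicator
              (fun _ => -(1 / fθ) * (1 / PT1 * (e x / (1 - e x)) * (-(G x)))) ω
           + ({ω' | T ω' = 1} ∩ {ω' | X ω' = x}).indicator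
              (fun _ => -(1 / fθ) * (1 / PT1 * (G x - q))) ω) := by
    funext ω
    rw [Finset.sum_eq_single (X ω)]
    · rcases hT01 ω with h0 | h1
      · by_cases hy : Y ω ≤ θ₀
        · simp only [Set.indicator_apply, Set.mem_inter_iff, Set.mem_setOf_eq, h0, hy]
          norm_num; ring
        · simp only [Set.indicator_apply, Set.mem_inter_iff, Set.mem_setOf_eq, h0, hy]
          norm_num
          try ring
      · simp only [Set.indicator_apply, Set.mem_inter_iff, Set.mem_setOf_eq, h1]
        norm_num
        try ring
    · intro x _ hx
      have h1 : ω ∉ {ω' | Y ω' ≤ θ₀} ∩ {ω' | T ω' = 0} ∩ {ω' | X ω' = x} :=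
        fun h => hx h.2.symm
      have h2 : ω ∉ {ω' | T ω' = 0} ∩ {ω' | X ω' = x} := fun h => hx h.2.symm
      have h3 : ω ∉ {ω' | T ω' = 1} ∩ {ω' | X ω' = x} := fun h => hx h.2.symm
      simp [Set.indicator_of_notMem, h1, h2, h3]
    · intro h; exact absurd (Finset.mem_univ (X ω)) h
  rw [hfun]
  -- integrability of the pieces
  have int1 : ∀ x : α, Integrable (fun ω =>
      ({ω' | Y ω' ≤ θ₀} ∩ {ω' | T ω' = 0} ∩ {ω' | X ω' = x}).indicator
        (fun _ => -(1 / fθ) * (1 / PT1 * (e x / (1 - e x)))) ω) P :=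
    fun x => (integrable_const _).indicator ((mY.inter mT0).inter (mX x))
  have int2 : ∀ x : α, Integrable (fun ω =>
      ({ω' | T ω' = 0} ∩ {ω' | X ω' = x}).indicator
        (fun _ => -(1 / fθ) * (1 / PT1 * (e x / (1 - e x)) * (-(G x)))) ω) P :=
    fun x => (integrable_const _).indicator (mT0.inter (mX x))
  have int3 : ∀ x : α, Integrable (fun ω =>
      ({ω' | T ω' = 1} ∩ {ω' | X ω' = x}).indicator
        (fun _ => -(1 / fθ) * (1 / PT1 * (G x - q))) ω) P :=
    fun x => (integrable_const _).indicator (mT1.inter (mX x))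
  have int12 : ∀ x : α, Integrable (fun ω =>
      ({ω' | Y ω' ≤ θ₀} ∩ {ω' | T ω' = 0} ∩ {ω' | X ω' = x}).indicator
        (fun _ => -(1 / fθ) * (1 / PT1 * (e x / (1 - e x)))) ω
      + ({ω' | T ω' = 0} ∩ {ω' | X ω' = x}).indicator
        (fun _ => -(1 / fθ) * (1 / PT1 * (e x / (1 - e x)) * (-(G x)))) ω) P :=
    fun x => (int1 x).add (int2 x)
  have int123 : ∀ x : α, Integrable (fun ω =>
      ({ω' | Y ω' ≤ θ₀} ∩ {ω' | T ω' = 0} ∩ {ω' | X ω' = x}).indicator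
        (fun _ => -(1 / fθ) * (1 / PT1 * (e x / (1 - e x)))) ω
      + ({ω' | T ω' = 0} ∩ {ω' | X ω' = x}).indicator
        (fun _ => -(1 / fθ) * (1 / PT1 * (e x / (1 - e x)) * (-(G x)))) ω
      + ({ω' | T ω' = 1} ∩ {ω' | X ω' = x}).indicator
        (fun _ => -(1 / fθ) * (1 / PT1 * (G x - q))) ω) P :=
    fun x => (int12 x).add (int3 x)
  rw [integral_finset_sum _ (fun x _ => int123 x)]
  have hint : ∀ x : α,
      (∫ ω, (({ω' | Y ω' ≤ θ₀} ∩ {ω' | T ω' = 0} ∩ {ω' | X ω' = x}).indicator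
              (fun _ => -(1 / fθ) * (1 / PT1 * (e x / (1 - e x)))) ω
           + ({ω' | T ω' = 0} ∩ {ω' | X ω' = x}).indicator
              (fun _ => -(1 / fθ) * (1 / PT1 * (e x / (1 - e x)) * (-(G x)))) ω
           + ({ω' | T ω' = 1} ∩ {ω' | X ω' = x}).indicator
              (fun _ => -(1 / fθ) * (1 / PT1 * (G x - q))) ω) ∂P)
      = (P ({ω' | Y ω' ≤ θ₀} ∩ {ω' | T ω' = 0} ∩ {ω' | X ω' = x})).toReal
            * (-(1 / fθ) * (1 / PT1 * (e x / (1 - e x))))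
        + (P ({ω' | T ω' = 0} ∩ {ω' | X ω' = x})).toReal
            * (-(1 / fθ) * (1 / PT1 * (e x / (1 - e x)) * (-(G x))))
        + (P ({ω' | T ω' = 1} ∩ {ω' | X ω' = x})).toReal
            * (-(1 / fθ) * (1 / PT1 * (G x - q))) := by
    intro x
    rw [integral_add (int12 x) (int3 x), integral_add (int1 x) (int2 x),
      integral_indicator_const _ ((mY.inter mT0).inter (mX x)),
      integral_indicator_const _ (mT0.inter (mX x)),
      integral_indicator_const _ (mT1.inter (mX x))]
    simp [smul_eq_mul, mul_comm]
    rfl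
  rw [Finset.sum_congr rfl (fun x _ => hint x)]
  -- basic measure facts
  have hPT1ne : PT1 ≠ 0 :=
    ENNReal.toReal_ne_zero.mpr ⟨hT1, measure_ne_top P _⟩
  have hsum1 : ∑ x : α, (P ({ω' | T ω' = 1} ∩ {ω' | X ω' = x})).toReal = PT1 := by
    have hU : {ω' | T ω' = 1} = ⋃ x : α, ({ω' | T ω' = 1} ∩ {ω' | X ω' = x}) := by
      ext ω; simp only [Set.mem_iUnion, Set.mem_inter_iff, Set.mem_setOf_eq]
      exact ⟨fun h => ⟨X ω, h, rfl⟩, fun ⟨x, h, _⟩ => h⟩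
    have hdisj : Pairwise (Function.onFun Disjoint
        (fun x : α => {ω' | T ω' = 1} ∩ {ω' | X ω' = x})) := by
      intro i j hij
      refine Set.disjoint_left.mpr fun ω hi hj => hij ?_
      rw [← hi.2, ← hj.2]
    have hm : P {ω' | T ω' = 1} = ∑' x : α, P ({ω' | T ω' = 1} ∩ {ω' | X ω' = x}) := by
      rw [← measure_iUnion hdisj (fun x => mT1.inter (mX x)), ← hU]
    rw [hPT1def, hm, tsum_fintype, ENNReal.toReal_sum (fun x _ => measure_ne_top P _)]
  have hadd : ∀ x : α, (P {ω' | X ω' = x}).toReal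
      = (P ({ω' | T ω' = 0} ∩ {ω' | X ω' = x})).toReal
        + (P ({ω' | T ω' = 1} ∩ {ω' | X ω' = x})).toReal := by
    intro x
    have hU : {ω' | X ω' = x}
        = ({ω' | T ω' = 0} ∩ {ω' | X ω' = x}) ∪ ({ω' | T ω' = 1} ∩ {ω' | X ω' = x}) := by
      ext ω; simp only [Set.mem_union, Set.mem_inter_iff, Set.mem_setOf_eq]
      constructor
      · intro h; rcases hT01 ω with h0 | h1
        · exact Or.inl ⟨h0, h⟩
        · exact Or.inr ⟨h1, h⟩
      · rintro (⟨_, h⟩ | ⟨_, h⟩) <;> exact h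
    have hdisj : Disjoint ({ω' | T ω' = 0} ∩ {ω' | X ω' = x})
        ({ω' | T ω' = 1} ∩ {ω' | X ω' = x}) := by
      refine Set.disjoint_left.mpr fun ω h0 h1 => ?_
      have hh0 : T ω = 0 := h0.1
      have hh1 : T ω = 1 := h1.1
      omega
    have hm : P {ω' | X ω' = x} = P ({ω' | T ω' = 0} ∩ {ω' | X ω' = x})
        + P ({ω' | T ω' = 1} ∩ {ω' | X ω' = x}) := by
      rw [← measure_union hdisj (mT1.inter (mX x)), ← hU]
    rw [hm, ENNReal.toReal_add (measure_ne_top P _) (measure_ne_top P _)]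
  -- the quantile condition
  have hq0 : ∑ x : α, (G₀ x - q) * (P ({ω' | T ω' = 1} ∩ {ω' | X ω' = x})).toReal = 0 := by
    have hco : ∀ x : α, ({ω | X ω = x} ∩ {ω | T ω = 1}) = ({ω' | T ω' = 1} ∩ {ω' | X ω' = x}) :=
      fun x => Set.inter_comm _ _
    have h1 : ∑ x : α, G₀ x * (P ({ω' | T ω' = 1} ∩ {ω' | X ω' = x})).toReal = q * PT1 := by
      have h2 := congrArg (· * PT1) hθ₀
      simp only [Finset.sum_mul] at h2
      rw [← h2]
      refine Finset.sum_congr rfl fun x _ => ?_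
      rw [hco x]
      field_simp
    calc ∑ x : α, (G₀ x - q) * (P ({ω' | T ω' = 1} ∩ {ω' | X ω' = x})).toReal
        = (∑ x : α, G₀ x * (P ({ω' | T ω' = 1} ∩ {ω' | X ω' = x})).toReal)
          - q * ∑ x : α, (P ({ω' | T ω' = 1} ∩ {ω' | X ω' = x})).toReal := by
          rw [Finset.mul_sum, ← Finset.sum_sub_distrib]
          exact Finset.sum_congr rfl fun x _ => by ring
      _ = 0 := by rw [h1, hsum1]; ring
  -- per-point identity
  have hterm : ∀ x : α,
      (P ({ω' | Y ω' ≤ θ₀} ∩ {ω' | T ω' = 0} ∩ {ω' | X ω' = x})).toReal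
            * (-(1 / fθ) * (1 / PT1 * (e x / (1 - e x))))
        + (P ({ω' | T ω' = 0} ∩ {ω' | X ω' = x})).toReal
            * (-(1 / fθ) * (1 / PT1 * (e x / (1 - e x)) * (-(G x))))
        + (P ({ω' | T ω' = 1} ∩ {ω' | X ω' = x})).toReal
            * (-(1 / fθ) * (1 / PT1 * (G x - q)))
      = -(1 / fθ) * (1 / PT1
          * ((G₀ x - q) * (P ({ω' | T ω' = 1} ∩ {ω' | X ω' = x})).toReal)) := by
    intro x
    by_cases hx : P {ω' | X ω' = x} = 0
    · have h0 : P ({ω' | T ω' = 0} ∩ {ω' | X ω' = x}) = 0 :=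
        measure_mono_null Set.inter_subset_right hx
      have h1 : P ({ω' | T ω' = 1} ∩ {ω' | X ω' = x}) = 0 :=
        measure_mono_null Set.inter_subset_right hx
      have hy : P ({ω' | Y ω' ≤ θ₀} ∩ {ω' | T ω' = 0} ∩ {ω' | X ω' = x}) = 0 :=
        measure_mono_null Set.inter_subset_right hx
      simp [h0, h1, hy]
    · have hp0 : (P ({ω' | T ω' = 0} ∩ {ω' | X ω' = x})).toReal ≠ 0 :=
        ENNReal.toReal_ne_zero.mpr ⟨hpos0 x hx, measure_ne_top P _⟩
      have hpy : (P ({ω' | Y ω' ≤ θ₀} ∩ {ω' | T ω' = 0} ∩ {ω' | X ω' = x})).toReal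
          = G₀ x * (P ({ω' | T ω' = 0} ∩ {ω' | X ω' = x})).toReal := by
        rw [hG₀ x]; field_simp
      rcases hDR with hDRG | hDRe
      · rw [hpy, hDRG x hx]; ring
      · have hpxne : (P {ω' | X ω' = x}).toReal ≠ 0 := by
          rw [hadd x]
          have h1 : (0:ℝ) ≤ (P ({ω' | T ω' = 1} ∩ {ω' | X ω' = x})).toReal :=
            ENNReal.toReal_nonneg
          have h0 : (0:ℝ) < (P ({ω' | T ω' = 0} ∩ {ω' | X ω' = x})).toReal :=
            lt_of_le_of_ne ENNReal.toReal_nonneg (Ne.symm hp0)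
          intro h; linarith
        have h1e : 1 - e x ≠ 0 := by
          have := (he x).2; intro h; linarith
        have hsumne : (P ({ω' | T ω' = 0} ∩ {ω' | X ω' = x})).toReal
            + (P ({ω' | T ω' = 1} ∩ {ω' | X ω' = x})).toReal ≠ 0 := by
          have h1 : (0:ℝ) ≤ (P ({ω' | T ω' = 1} ∩ {ω' | X ω' = x})).toReal :=
            ENNReal.toReal_nonneg
          have h0 : (0:ℝ) < (P ({ω' | T ω' = 0} ∩ {ω' | X ω' = x})).toReal :=
            lt_of_le_of_ne ENNReal.toReal_nonneg (Ne.symm hp0)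
          intro h; linarith
        have hr : e x / (1 - e x)
            = (P ({ω' | T ω' = 1} ∩ {ω' | X ω' = x})).toReal
              / (P ({ω' | T ω' = 0} ∩ {ω' | X ω' = x})).toReal := by
          rw [div_eq_div_iff h1e hp0, hDRe x hx, he₀ x, hadd x]
          field_simp
          try ring
        rw [hpy, hr]
        field_simp
        ring
  rw [Finset.sum_congr rfl (fun x _ => hterm x)]
  rw [← Finset.mul_sum, ← Finset.mul_sum, hq0]
  ring
end

section
/- Exact representation of the bias of the treated-quantile influence function: with h_θ(x) = G(θ|0,x), h_{0,θ}(x) = G₀(θ|0,x), π₀ = P₀(T=1), e₀(x) = P₀(T=1|X=x), one has E₀[D_{η,θ₀}] = -(1/(f(θ₀)π₀))·E₀[ ((1-e₀(X))·e(X)/(1-e(X)) - e₀(X))·(h_{0,θ₀}(X) - h_{θ₀}(X)) ], where θ₀ satisfies E₀[h_{0,θ₀}(X)·T]/π₀ = q. -/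
open MeasureTheory

private lemma stmt13_aux (fθ π q ex Gx a0 a1 b : ℝ)
    (hfθ : fθ ≠ 0) (hπ : π ≠ 0) (hex : (1:ℝ) - ex ≠ 0) (ha0 : a0 ≠ 0)
    (hn : a0 + a1 ≠ 0) :
    b • (-(1/fθ) * ((1/π) * (ex / (1 - ex))))
      + a0 • (-(1/fθ) * (-((1/π) * (ex / (1 - ex)) * Gx)))
      + a1 • (-(1/fθ) * ((1/π) * (Gx - q)))
      = -(1/(fθ*π)) * (((1 - a1/(a0+a1)) * ex / (1 - ex) - a1/(a0+a1))
            * (b/a0 - Gx) * (a0+a1))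
        + -(1/(fθ*π)) * ((b/a0 - q) * a1) := by
  simp only [smul_eq_mul]
  field_simp
  ring

/-- Exact representation of the bias of the treated-quantile influence
function:
`E₀[D_{η,θ₀}] = -(1/(f(θ₀)π₀))·E₀[((1-e₀)·e/(1-e) - e₀)·(h₀ - h)]`. -/
theorem stmt13 {Ω α : Type*} [MeasurableSpace Ω] [Fintype α] [MeasurableSpace α]
    [MeasurableSingletonClass α]
    (P : Measure Ω) [IsProbabilityMeasure P]
    (X : Ω → α) (T : Ω → ℕ) (Y₀ Y : Ω → ℝ)
    (hX : Measurable X) (hT : Measurable T) (hYm : Measurable Y)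
    (hT01 : ∀ ω, T ω = 0 ∨ T ω = 1)
    (hY : ∀ ω, T ω = 0 → Y ω = Y₀ ω)
    (θ₀ q fθ : ℝ) (hf : 0 < fθ)
    (e : α → ℝ) (G : α → ℝ)
    (he : ∀ x, e x ∈ Set.Ioo (0 : ℝ) 1) (hG : ∀ x, G x ∈ Set.Icc (0 : ℝ) 1)
    (e₀ G₀ : α → ℝ)
    (he₀ : ∀ x, e₀ x = (P ({ω | T ω = 1} ∩ {ω | X ω = x})).toReal
                        / (P {ω | X ω = x}).toReal)
    (hG₀ : ∀ x, G₀ x = (P ({ω | Y ω ≤ θ₀} ∩ {ω | T ω = 0} ∩ {ω | X ω = x})).toReal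
                        / (P ({ω | T ω = 0} ∩ {ω | X ω = x})).toReal)
    -- ignorability  T ⟂ Y₀ ∣ X  (for the event {Y₀ ≤ θ₀}):
    (hCI : ∀ x : α,
      P ({ω | Y₀ ω ≤ θ₀} ∩ {ω | T ω = 1} ∩ {ω | X ω = x})
          * P ({ω | T ω = 0} ∩ {ω | X ω = x})
        = P ({ω | Y₀ ω ≤ θ₀} ∩ {ω | T ω = 0} ∩ {ω | X ω = x})
            * P ({ω | T ω = 1} ∩ {ω | X ω = x}))
    (hpos0 : ∀ x : α, P {ω | X ω = x} ≠ 0 → P ({ω | T ω = 0} ∩ {ω | X ω = x}) ≠ 0)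
    (hT1 : P {ω | T ω = 1} ≠ 0)
    -- θ₀ satisfies  E₀[h_{0,θ₀}(X)·T]/π₀ = q :
    (hθ₀ : (∑ x : α, G₀ x * (P ({ω | T ω = 1} ∩ {ω | X ω = x})).toReal)
              / (P {ω | T ω = 1}).toReal = q) :
    ∫ ω, -(1 / fθ)
        * ((Set.indicator {ω' | T ω' = 0} (fun _ => (1 : ℝ)) ω
                / (P {ω' | T ω' = 1}).toReal)
              * (e (X ω) / (1 - e (X ω)))
              * (Set.indicator {ω' | Y ω' ≤ θ₀} (fun _ => (1 : ℝ)) ω - G (X ω))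
            + (Set.indicator {ω' | T ω' = 1} (fun _ => (1 : ℝ)) ω
                / (P {ω' | T ω' = 1}).toReal)
              * (G (X ω) - q)) ∂P
      = -(1 / (fθ * (P {ω | T ω = 1}).toReal))
          * ∑ x : α,
              ((1 - e₀ x) * e x / (1 - e x) - e₀ x) * (G₀ x - G x)
                * (P {ω | X ω = x}).toReal := by
  classical
  have hfθ : fθ ≠ 0 := ne_of_gt hf
  set π : ℝ := (P {ω | T ω = 1}).toReal with hπdef
  have hπpos : 0 < π := ENNReal.toReal_pos hT1 (measure_ne_top _ _)
  have hπ : π ≠ 0 := ne_of_gt hπpos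
  set S1 : α → Set Ω := fun x => {ω | Y ω ≤ θ₀} ∩ {ω | T ω = 0} ∩ {ω | X ω = x}
    with hS1def
  set S2 : α → Set Ω := fun x => {ω | T ω = 0} ∩ {ω | X ω = x} with hS2def
  set S3 : α → Set Ω := fun x => {ω | T ω = 1} ∩ {ω | X ω = x} with hS3def
  have mX : ∀ x : α, MeasurableSet {ω | X ω = x} := fun x =>
    hX (measurableSet_singleton x)
  have mT0 : MeasurableSet {ω | T ω = 0} := hT (measurableSet_singleton 0)
  have mT1 : MeasurableSet {ω | T ω = 1} := hT (measurableSet_singleton 1)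
  have mYs : MeasurableSet {ω | Y ω ≤ θ₀} := hYm measurableSet_Iic
  have mS1 : ∀ x, MeasurableSet (S1 x) := fun x => (mYs.inter mT0).inter (mX x)
  have mS2 : ∀ x, MeasurableSet (S2 x) := fun x => mT0.inter (mX x)
  have mS3 : ∀ x, MeasurableSet (S3 x) := fun x => mT1.inter (mX x)
  set c₀ : α → ℝ := fun x => -(1/fθ) * ((1/π) * (e x / (1 - e x))) with hc₀
  set d₀ : α → ℝ := fun x => -(1/fθ) * (-((1/π) * (e x / (1 - e x)) * G x)) with hd₀
  set d₁ : α → ℝ := fun x => -(1/fθ) * ((1/π) * (G x - q)) with hd₁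
  set g : α → Ω → ℝ := fun x ω => (S1 x).indicator (fun _ => c₀ x) ω
      + (S2 x).indicator (fun _ => d₀ x) ω
      + (S3 x).indicator (fun _ => d₁ x) ω with hgdef
  -- pointwise decomposition of the integrand
  have hfun : ∀ ω, -(1 / fθ)
        * ((Set.indicator {ω' | T ω' = 0} (fun _ => (1 : ℝ)) ω / π)
              * (e (X ω) / (1 - e (X ω)))
              * (Set.indicator {ω' | Y ω' ≤ θ₀} (fun _ => (1 : ℝ)) ω - G (X ω))
            + (Set.indicator {ω' | T ω' = 1} (fun _ => (1 : ℝ)) ω / π)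
              * (G (X ω) - q))
      = ∑ x : α, g x ω := by
    intro ω
    simp only [hgdef]
    rw [Finset.sum_eq_single (X ω)]
    · rcases hT01 ω with h0 | h1
      · by_cases hy : Y ω ≤ θ₀
        · simp only [Set.indicator_apply, hS1def, hS2def, hS3def, Set.mem_inter_iff,
            Set.mem_setOf_eq, h0, hy, hc₀, hd₀, hd₁]
          first
          | (norm_num; ring)
          | norm_num
        · simp only [Set.indicator_apply, hS1def, hS2def, hS3def, Set.mem_inter_iff,
            Set.mem_setOf_eq, h0, hy, hc₀, hd₀, hd₁]
          first
          | (norm_num; ring)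
          | norm_num
      · by_cases hy : Y ω ≤ θ₀
        · simp only [Set.indicator_apply, hS1def, hS2def, hS3def, Set.mem_inter_iff,
            Set.mem_setOf_eq, h1, hy, hc₀, hd₀, hd₁]
          first
          | (norm_num; ring)
          | norm_num
        · simp only [Set.indicator_apply, hS1def, hS2def, hS3def, Set.mem_inter_iff,
            Set.mem_setOf_eq, h1, hy, hc₀, hd₀, hd₁]
          first
          | (norm_num; ring)
          | norm_num
    · intro b _ hb
      have hb' : X ω ≠ b := Ne.symm hb
      simp [Set.indicator_apply, hS1def, hS2def, hS3def, Set.mem_inter_iff,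
        Set.mem_setOf_eq, hb']
    · intro h; exact absurd (Finset.mem_univ _) h
  -- compute the integral
  have hInt : (∫ ω, -(1 / fθ)
        * ((Set.indicator {ω' | T ω' = 0} (fun _ => (1 : ℝ)) ω / π)
              * (e (X ω) / (1 - e (X ω)))
              * (Set.indicator {ω' | Y ω' ≤ θ₀} (fun _ => (1 : ℝ)) ω - G (X ω))
            + (Set.indicator {ω' | T ω' = 1} (fun _ => (1 : ℝ)) ω / π)
              * (G (X ω) - q)) ∂P)
      = ∑ x : α, ((P (S1 x)).toReal • c₀ x + (P (S2 x)).toReal • d₀ x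
          + (P (S3 x)).toReal • d₁ x) := by
    have hI1 : ∀ x : α, Integrable ((S1 x).indicator fun _ => c₀ x) P :=
      fun x => (integrable_const (c₀ x)).indicator (mS1 x)
    have hI2 : ∀ x : α, Integrable ((S2 x).indicator fun _ => d₀ x) P :=
      fun x => (integrable_const (d₀ x)).indicator (mS2 x)
    have hI3 : ∀ x : α, Integrable ((S3 x).indicator fun _ => d₁ x) P :=
      fun x => (integrable_const (d₁ x)).indicator (mS3 x)
    have hg : ∀ x : α, Integrable (g x) P :=
      fun x => ((hI1 x).add (hI2 x)).add (hI3 x)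
    rw [integral_congr_ae (ae_of_all P hfun)]
    rw [integral_finset_sum _ (fun x _ => hg x)]
    refine Finset.sum_congr rfl fun x _ => ?_
    simp only [hgdef]
    have h12 : Integrable (fun ω => (S1 x).indicator (fun _ => c₀ x) ω
        + (S2 x).indicator (fun _ => d₀ x) ω) P := (hI1 x).add (hI2 x)
    rw [integral_add h12 (hI3 x), integral_add (hI1 x) (hI2 x),
      integral_indicator_const (c₀ x) (mS1 x), integral_indicator_const (d₀ x) (mS2 x),
      integral_indicator_const (d₁ x) (mS3 x)]
    rfl
  -- decomposition of {X = x}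
  have hA : ∀ x : α, P {ω | X ω = x} = P (S2 x) + P (S3 x) := by
    intro x
    have hu : {ω | X ω = x} = S2 x ∪ S3 x := by
      ext ω
      simp only [hS2def, hS3def, Set.mem_union, Set.mem_inter_iff, Set.mem_setOf_eq]
      constructor
      · intro hx
        rcases hT01 ω with h0 | h1
        · exact Or.inl ⟨h0, hx⟩
        · exact Or.inr ⟨h1, hx⟩
      · rintro (⟨_, hx⟩ | ⟨_, hx⟩) <;> exact hx
    have hdis : Disjoint (S2 x) (S3 x) := by
      rw [Set.disjoint_left]
      rintro ω ⟨h0, -⟩ ⟨h1, -⟩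
      simp only [Set.mem_setOf_eq] at h0 h1
      omega
    rw [hu, measure_union hdis (mS3 x)]
  -- per-x identity
  have hkey : ∀ x : α,
      (P (S1 x)).toReal • c₀ x + (P (S2 x)).toReal • d₀ x + (P (S3 x)).toReal • d₁ x
        = -(1/(fθ*π)) * (((1 - e₀ x) * e x / (1 - e x) - e₀ x) * (G₀ x - G x)
            * (P {ω | X ω = x}).toReal)
          + -(1/(fθ*π)) * ((G₀ x - q) * (P (S3 x)).toReal) := by
    intro x
    by_cases hx : P {ω | X ω = x} = 0
    · have h1 : P (S1 x) = 0 :=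
        measure_mono_null (fun ω hω => hω.2) hx
      have h2 : P (S2 x) = 0 :=
        measure_mono_null (fun ω hω => hω.2) hx
      have h3 : P (S3 x) = 0 :=
        measure_mono_null (fun ω hω => hω.2) hx
      simp [h1, h2, h3, hx]
    · have hex : (1:ℝ) - e x ≠ 0 := sub_ne_zero.mpr (Ne.symm (ne_of_lt (he x).2))
      have ha0 : (P (S2 x)).toReal ≠ 0 :=
        ne_of_gt (ENNReal.toReal_pos (hpos0 x hx) (measure_ne_top _ _))
      have hnx : (P {ω | X ω = x}).toReal = (P (S2 x)).toReal + (P (S3 x)).toReal := by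
        rw [hA x, ENNReal.toReal_add (measure_ne_top _ _) (measure_ne_top _ _)]
      have hn : (P (S2 x)).toReal + (P (S3 x)).toReal ≠ 0 := by
        rw [← hnx]
        exact ne_of_gt (ENNReal.toReal_pos hx (measure_ne_top _ _))
      rw [he₀ x, hG₀ x, hc₀, hd₀, hd₁]
      rw [hnx]
      exact stmt13_aux fθ π q (e x) (G x) (P (S2 x)).toReal (P (S3 x)).toReal
        (P (S1 x)).toReal hfθ hπ hex ha0 hn
  -- the residual term sums to zero
  have hsum3 : ∑ x : α, (P (S3 x)).toReal = π := by
    have hu : {ω | T ω = 1} = ⋃ x ∈ Finset.univ, S3 x := by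
      ext ω
      simp only [hS3def, Set.mem_iUnion, Set.mem_inter_iff, Set.mem_setOf_eq,
        Finset.mem_univ, exists_prop, true_and]
      exact ⟨fun h => ⟨X ω, h, rfl⟩, fun ⟨x, h, _⟩ => h⟩
    have hdis : ((Finset.univ : Finset α) : Set α).PairwiseDisjoint S3 := by
      intro x _ y _ hxy
      rw [Function.onFun, Set.disjoint_left]
      rintro ω ⟨-, hx⟩ ⟨-, hy⟩
      simp only [Set.mem_setOf_eq] at hx hy
      exact hxy (by rw [← hx, ← hy])
    rw [hπdef, hu, measure_biUnion_finset hdis (fun x _ => mS3 x),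
      ENNReal.toReal_sum (fun x _ => measure_ne_top _ _)]
  have hq : ∑ x : α, G₀ x * (P (S3 x)).toReal = q * π := by
    rw [div_eq_iff hπ] at hθ₀
    exact hθ₀
  have hzero : ∑ x : α, (G₀ x - q) * (P (S3 x)).toReal = 0 := by
    have : ∑ x : α, (G₀ x - q) * (P (S3 x)).toReal
        = ∑ x : α, G₀ x * (P (S3 x)).toReal - q * ∑ x : α, (P (S3 x)).toReal := by
      rw [Finset.mul_sum, ← Finset.sum_sub_distrib]
      exact Finset.sum_congr rfl fun x _ => by ring
    rw [this, hq, hsum3]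
    ring
  -- put everything together
  rw [hInt]
  calc ∑ x : α, ((P (S1 x)).toReal • c₀ x + (P (S2 x)).toReal • d₀ x
          + (P (S3 x)).toReal • d₁ x)
      = ∑ x : α, (-(1/(fθ*π)) * (((1 - e₀ x) * e x / (1 - e x) - e₀ x) * (G₀ x - G x)
            * (P {ω | X ω = x}).toReal)
          + -(1/(fθ*π)) * ((G₀ x - q) * (P (S3 x)).toReal)) :=
        Finset.sum_congr rfl fun x _ => hkey x
    _ = -(1/(fθ*π)) * (∑ x : α, ((1 - e₀ x) * e x / (1 - e x) - e₀ x) * (G₀ x - G x)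
            * (P {ω | X ω = x}).toReal)
          + -(1/(fθ*π)) * ∑ x : α, (G₀ x - q) * (P (S3 x)).toReal := by
        rw [Finset.sum_add_distrib, Finset.mul_sum, Finset.mul_sum]
    _ = -(1/(fθ*π)) * ∑ x : α, ((1 - e₀ x) * e x / (1 - e x) - e₀ x) * (G₀ x - G x)
            * (P {ω | X ω = x}).toReal := by
        rw [hzero]; ring
end

section
/- Variance lower bound for quantile vs. degenerate EIF: for the efficient influence function D₀(Z) = -(1/f₀(θ₀))·[(M/e₀(X))·(1_{Y≤θ₀} - G₀(θ₀|1,X)) + G₀(θ₀|1,X) - q] one has Var₀(D₀(Z)) ≥ q(1-q)/f₀(θ₀)², with equality when P₀(M=1)=1 and G₀(θ₀|1,X) is constant (no covariate information). -/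
open MeasureTheory ProbabilityTheory

private lemma quantAux1 (pA pM pS G q : ℝ) (hA : G * pM = pA) :
    (1 / (pM / pS) * (1 - G) + G - q) * pA
      + (1 / (pM / pS) * (0 - G) + G - q) * (pM - pA)
      + (G - q) * (pS - pM) = (G - q) * pS := by
  subst hA; ring

private lemma quantAux2 (pA pM pS G q : ℝ) (h0 : 0 ≤ pA) (h1 : pA ≤ pM) (h2 : pM ≤ pS)
    (hA : G * pM = pA) (hMne : pS ≠ 0 → pM ≠ 0) :
    pS * (G * (1 - 2 * q) + q ^ 2)
      ≤ (1 / (pM / pS) * (1 - G) + G - q) ^ 2 * pA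
        + (1 / (pM / pS) * (0 - G) + G - q) ^ 2 * (pM - pA)
        + (G - q) ^ 2 * (pS - pM) := by
  subst hA
  rcases eq_or_ne pS 0 with hS | hS
  · have hM : pM = 0 := le_antisymm (h2.trans_eq hS) (h0.trans h1)
    simp [hS, hM]
  · have hM := hMne hS
    have hMpos : 0 < pM := lt_of_le_of_ne (h0.trans h1) (Ne.symm hM)
    have hSpos : 0 < pS := lt_of_lt_of_le hMpos h2
    have hG0 : 0 ≤ G := by nlinarith
    have hG1 : G ≤ 1 := by nlinarith
    have hr : (1 : ℝ) / (pM / pS) = pS / pM := one_div_div _ _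
    rw [hr]
    have key : (pS / pM * (1 - G) + G - q) ^ 2 * (G * pM)
        + (pS / pM * (0 - G) + G - q) ^ 2 * (pM - G * pM)
        + (G - q) ^ 2 * (pS - pM)
        = (pS / pM) ^ 2 * pM * (G * (1 - G)) + (G - q) ^ 2 * pS := by
      field_simp
      ring
    rw [key]
    have h5 : pS ≤ (pS / pM) ^ 2 * pM := by
      rw [div_pow, div_mul_eq_mul_div, le_div_iff₀ (by positivity)]
      nlinarith [mul_le_mul_of_nonneg_left h2 (mul_pos hSpos hMpos).le]
    have hGG : 0 ≤ G * (1 - G) := mul_nonneg hG0 (by linarith)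
    nlinarith [mul_le_mul_of_nonneg_right h5 hGG]

private lemma quantAux3 (pA pM pS G q : ℝ) (h0 : 0 ≤ pA) (h1 : pA ≤ pM)
    (hA : G * pM = pA) (hMS : pM = pS) (hGq : pS ≠ 0 → G = q) :
    (1 / (pM / pS) * (1 - G) + G - q) ^ 2 * pA
      + (1 / (pM / pS) * (0 - G) + G - q) ^ 2 * (pM - pA)
      + (G - q) ^ 2 * (pS - pM) = pS * (q * (1 - q)) := by
  subst hA
  subst hMS
  rcases eq_or_ne pM 0 with h | h
  · simp [h]
  · have hG := hGq h
    subst hG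
    rw [div_self h]
    field_simp
    ring

/-- The function on the (finite) factor type. -/
private noncomputable def quantH {α : Type*} (e₀ G₀ : α → ℝ) (q : ℝ) : α × Bool × Bool → ℝ := fun t =>
  ((if t.2.1 then (1 : ℝ) else 0) / e₀ t.1)
    * ((if t.2.2 then (1 : ℝ) else 0) - G₀ t.1) + G₀ t.1 - q

private lemma quantH_tt {α : Type*} (e₀ G₀ : α → ℝ) (q : ℝ) (x : α) :
    quantH e₀ G₀ q (x, true, true) = 1 / e₀ x * (1 - G₀ x) + G₀ x - q := by
  simp [quantH]

private lemma quantH_tf {α : Type*} (e₀ G₀ : α → ℝ) (q : ℝ) (x : α) :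
    quantH e₀ G₀ q (x, true, false) = 1 / e₀ x * (0 - G₀ x) + G₀ x - q := by
  simp [quantH]

private lemma quantH_f {α : Type*} (e₀ G₀ : α → ℝ) (q : ℝ) (x : α) (c : Bool) :
    quantH e₀ G₀ q (x, false, c) = G₀ x - q := by
  simp [quantH]

private theorem quantCore {Ω α : Type*} [MeasurableSpace Ω] [Fintype α] [MeasurableSpace α]
    [MeasurableSingletonClass α]
    (P : Measure Ω) [IsProbabilityMeasure P]
    (X : Ω → α) (M : Ω → ℕ) (Y : Ω → ℝ)
    (hX : Measurable X) (hM : Measurable M) (hY : Measurable Y)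
    (θ₀ q : ℝ)
    (e₀ G₀ : α → ℝ)
    (he₀ : ∀ x, e₀ x = (P ({ω | M ω = 1} ∩ {ω | X ω = x})).toReal
                        / (P {ω | X ω = x}).toReal)
    (hG₀ : ∀ x, G₀ x = (P ({ω | Y ω ≤ θ₀} ∩ {ω | M ω = 1} ∩ {ω | X ω = x})).toReal
                        / (P ({ω | M ω = 1} ∩ {ω | X ω = x})).toReal)
    (hpos : ∀ x : α, P {ω | X ω = x} ≠ 0 → P ({ω | M ω = 1} ∩ {ω | X ω = x}) ≠ 0)
    (hθ₀ : ∑ x : α, G₀ x * (P {ω | X ω = x}).toReal = q) :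
    q * (1 - q)
      ≤ variance (fun ω =>
          (Set.indicator {ω' | M ω' = 1} (fun _ => (1 : ℝ)) ω / e₀ (X ω))
              * (Set.indicator {ω' | Y ω' ≤ θ₀} (fun _ => (1 : ℝ)) ω - G₀ (X ω))
            + G₀ (X ω) - q) P
      ∧ ((P {ω | M ω = 1} = 1 ∧ ∀ x : α, P {ω | X ω = x} ≠ 0 → G₀ x = q) →
          variance (fun ω =>
            (Set.indicator {ω' | M ω' = 1} (fun _ => (1 : ℝ)) ω / e₀ (X ω))
                * (Set.indicator {ω' | Y ω' ≤ θ₀} (fun _ => (1 : ℝ)) ω - G₀ (X ω))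
              + G₀ (X ω) - q) P = q * (1 - q)) := by
  classical
  have hsM : MeasurableSet {ω | M ω = 1} := hM (measurableSet_singleton 1)
  have hsY : MeasurableSet {ω | Y ω ≤ θ₀} := hY measurableSet_Iic
  have hsX : ∀ x : α, MeasurableSet {ω | X ω = x} := fun x => hX (measurableSet_singleton x)
  have hb1 : Measurable fun ω => decide (M ω = 1) :=
    (measurable_from_nat (f := fun n => decide (n = 1))).comp hM
  have hb2 : Measurable fun ω => decide (Y ω ≤ θ₀) := by
    apply measurable_to_bool
    have : (fun ω => decide (Y ω ≤ θ₀)) ⁻¹' {true} = {ω | Y ω ≤ θ₀} := by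
      ext ω; simp
    rw [this]; exact hsY
  set T : Ω → α × Bool × Bool := fun ω => (X ω, decide (M ω = 1), decide (Y ω ≤ θ₀))
    with hTdef
  have hT : Measurable T := hX.prod (hb1.prod hb2)
  haveI : IsProbabilityMeasure (P.map T) := Measure.isProbabilityMeasure_map hT.aemeasurable
  -- the function factors through T
  have hcomp : (fun ω =>
      (Set.indicator {ω' | M ω' = 1} (fun _ => (1 : ℝ)) ω / e₀ (X ω))
          * (Set.indicator {ω' | Y ω' ≤ θ₀} (fun _ => (1 : ℝ)) ω - G₀ (X ω))
        + G₀ (X ω) - q) = fun ω => quantH e₀ G₀ q (T ω) := by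
    funext ω
    simp only [quantH, hTdef, Set.indicator_apply, Set.mem_setOf_eq, decide_eq_true_eq]
  -- integrals of functions of T
  have hint : ∀ g : α × Bool × Bool → ℝ,
      ∫ ω, g (T ω) ∂P = ∑ t : α × Bool × Bool, ((P.map T) {t}).toReal • g t := by
    intro g
    rw [← integral_map hT.aemeasurable (measurable_of_countable g).aestronglyMeasurable,
      integral_fintype Integrable.of_finite]; rfl
  -- Memℒp
  have hMemLp : MemLp (fun ω => quantH e₀ G₀ q (T ω)) 2 P := by
    refine MemLp.of_bound ((measurable_of_countable (quantH e₀ G₀ q)).comp hT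
      |>.aestronglyMeasurable) (∑ t : α × Bool × Bool, ‖quantH e₀ G₀ q t‖)
      (Filter.Eventually.of_forall fun ω => ?_)
    exact Finset.single_le_sum (f := fun t => ‖quantH e₀ G₀ q t‖)
      (fun t _ => norm_nonneg _) (Finset.mem_univ (T ω))
  -- total mass of X-fibres
  have hsum1 : ∑ x : α, P {ω | X ω = x} = 1 := by
    have h := sum_measure_preimage_singleton (μ := P) (Finset.univ : Finset α) (f := X)
      (fun y _ => hX (measurableSet_singleton y))
    simp at h; exact h
  have hSsum : ∑ x : α, (P {ω | X ω = x}).toReal = 1 := by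
    rw [← ENNReal.toReal_sum (fun _ _ => measure_ne_top _ _), hsum1, ENNReal.toReal_one]
  -- per-x facts
  have perx : ∀ x : α,
      ((P.map T) {(x, true, true)}).toReal = (P ({ω | Y ω ≤ θ₀} ∩ {ω | M ω = 1} ∩ {ω | X ω = x})).toReal
      ∧ ((P.map T) {(x, true, false)}).toReal
          = (P ({ω | M ω = 1} ∩ {ω | X ω = x})).toReal
              - (P ({ω | Y ω ≤ θ₀} ∩ {ω | M ω = 1} ∩ {ω | X ω = x})).toReal
      ∧ ((P.map T) {(x, false, true)}).toReal + ((P.map T) {(x, false, false)}).toReal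
          = (P {ω | X ω = x}).toReal - (P ({ω | M ω = 1} ∩ {ω | X ω = x})).toReal := by
    intro x
    have hAM : {ω | Y ω ≤ θ₀} ∩ {ω | M ω = 1} ∩ {ω | X ω = x}
        ⊆ {ω | M ω = 1} ∩ {ω | X ω = x} :=
      Set.inter_subset_inter_left _ Set.inter_subset_right
    have hMS : ({ω | M ω = 1} ∩ {ω | X ω = x} : Set Ω) ⊆ {ω | X ω = x} :=
      Set.inter_subset_right
    have hmAx : MeasurableSet ({ω | Y ω ≤ θ₀} ∩ {ω | M ω = 1} ∩ {ω | X ω = x}) :=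
      (hsY.inter hsM).inter (hsX x)
    have hmMx : MeasurableSet ({ω | M ω = 1} ∩ {ω | X ω = x}) := hsM.inter (hsX x)
    refine ⟨?_, ?_, ?_⟩
    · rw [Measure.map_apply hT (measurableSet_singleton _)]
      congr 2
      ext ω
      simp only [hTdef, Set.mem_preimage, Set.mem_singleton_iff, Prod.mk.injEq,
        decide_eq_true_eq, Set.mem_inter_iff, Set.mem_setOf_eq]
      tauto
    · rw [Measure.map_apply hT (measurableSet_singleton _)]
      have hset : T ⁻¹' {(x, true, false)}
          = ({ω | M ω = 1} ∩ {ω | X ω = x})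
              \ ({ω | Y ω ≤ θ₀} ∩ {ω | M ω = 1} ∩ {ω | X ω = x}) := by
        ext ω
        simp only [hTdef, Set.mem_preimage, Set.mem_singleton_iff, Prod.mk.injEq,
          decide_eq_true_eq, decide_eq_false_iff_not, Set.mem_diff, Set.mem_inter_iff,
          Set.mem_setOf_eq]
        tauto
      rw [hset, measure_diff hAM hmAx.nullMeasurableSet (measure_ne_top P _),
        ENNReal.toReal_sub_of_le (measure_mono hAM) (measure_ne_top P _)]
    · rw [Measure.map_apply hT (measurableSet_singleton _),
        Measure.map_apply hT (measurableSet_singleton _)]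
      have hset : (T ⁻¹' {(x, false, true)}) ∪ (T ⁻¹' {(x, false, false)})
          = {ω | X ω = x} \ ({ω | M ω = 1} ∩ {ω | X ω = x}) := by
        ext ω
        simp only [hTdef, Set.mem_union, Set.mem_preimage, Set.mem_singleton_iff,
          Prod.mk.injEq, decide_eq_true_eq, decide_eq_false_iff_not, Set.mem_diff,
          Set.mem_inter_iff, Set.mem_setOf_eq]
        by_cases h : Y ω ≤ θ₀ <;> tauto
      have hdisj : Disjoint (T ⁻¹' {(x, false, true)}) (T ⁻¹' {(x, false, false)}) := by
        apply Set.disjoint_left.mpr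
        intro ω h1 h2
        simp only [hTdef, Set.mem_preimage, Set.mem_singleton_iff, Prod.mk.injEq] at h1 h2
        rw [h1.2.2] at h2
        exact absurd h2.2.2 (by simp)
      rw [← ENNReal.toReal_add (measure_ne_top _ _) (measure_ne_top _ _),
        ← measure_union hdisj (hT (measurableSet_singleton _)), hset,
        measure_diff hMS hmMx.nullMeasurableSet (measure_ne_top P _),
        ENNReal.toReal_sub_of_le (measure_mono hMS) (measure_ne_top P _)]
  -- the key real-valued per-x hypotheses for the aux lemmas
  have hAx : ∀ x : α,
      G₀ x * (P ({ω | M ω = 1} ∩ {ω | X ω = x})).toReal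
        = (P ({ω | Y ω ≤ θ₀} ∩ {ω | M ω = 1} ∩ {ω | X ω = x})).toReal := by
    intro x
    rcases eq_or_ne (P ({ω | M ω = 1} ∩ {ω | X ω = x})) 0 with h | h
    · have hA0 : P ({ω | Y ω ≤ θ₀} ∩ {ω | M ω = 1} ∩ {ω | X ω = x}) = 0 :=
        measure_mono_null (Set.inter_subset_inter_left _ Set.inter_subset_right) h
      simp [h, hA0]
    · rw [hG₀ x, div_mul_cancel₀]
      exact ENNReal.toReal_ne_zero.mpr ⟨h, measure_ne_top _ _⟩
  have hle1 : ∀ x : α,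
      (P ({ω | Y ω ≤ θ₀} ∩ {ω | M ω = 1} ∩ {ω | X ω = x})).toReal
        ≤ (P ({ω | M ω = 1} ∩ {ω | X ω = x})).toReal :=
    fun x => ENNReal.toReal_mono (measure_ne_top _ _)
      (measure_mono (Set.inter_subset_inter_left _ Set.inter_subset_right))
  have hle2 : ∀ x : α,
      (P ({ω | M ω = 1} ∩ {ω | X ω = x})).toReal ≤ (P {ω | X ω = x}).toReal :=
    fun x => ENNReal.toReal_mono (measure_ne_top _ _) (measure_mono Set.inter_subset_right)
  have hMne : ∀ x : α, (P {ω | X ω = x}).toReal ≠ 0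
      → (P ({ω | M ω = 1} ∩ {ω | X ω = x})).toReal ≠ 0 := by
    intro x hS
    have h1 : P {ω | X ω = x} ≠ 0 := fun h => hS (by simp [h])
    exact ENNReal.toReal_ne_zero.mpr ⟨hpos x h1, measure_ne_top _ _⟩
  -- mean zero
  have EH : ∫ ω, quantH e₀ G₀ q (T ω) ∂P = 0 := by
    rw [hint, Fintype.sum_prod_type]
    have hper : ∀ x : α, (∑ p : Bool × Bool, ((P.map T) {(x, p)}).toReal • quantH e₀ G₀ q (x, p))
        = (G₀ x - q) * (P {ω | X ω = x}).toReal := by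
      intro x
      obtain ⟨e1, e2, e3⟩ := perx x
      rw [Fintype.sum_prod_type, Fintype.sum_bool, Fintype.sum_bool, Fintype.sum_bool]
      simp only [smul_eq_mul, quantH_tt, quantH_tf, quantH_f]
      rw [e1, e2, he₀ x]
      linear_combination
        quantAux1 (P ({ω | Y ω ≤ θ₀} ∩ {ω | M ω = 1} ∩ {ω | X ω = x})).toReal
          (P ({ω | M ω = 1} ∩ {ω | X ω = x})).toReal (P {ω | X ω = x}).toReal
          (G₀ x) q (hAx x) + (G₀ x - q) * e3
    rw [Finset.sum_congr rfl (fun x _ => hper x)]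
    simp only [sub_mul]
    rw [Finset.sum_sub_distrib, hθ₀, ← Finset.mul_sum, hSsum, mul_one, sub_self]
  -- second moment
  have EH2 : ∫ ω, quantH e₀ G₀ q (T ω) ^ 2 ∂P
      = ∑ t : α × Bool × Bool, ((P.map T) {t}).toReal • (quantH e₀ G₀ q t ^ 2) := by
    have h1 : ∫ ω, quantH e₀ G₀ q (T ω) ^ 2 ∂P
        = ∫ t, quantH e₀ G₀ q t ^ 2 ∂(P.map T) :=
      (integral_map (f := fun t => quantH e₀ G₀ q t ^ 2) hT.aemeasurable
        (measurable_of_countable _).aestronglyMeasurable).symm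
    rw [h1, integral_fintype Integrable.of_finite]; rfl
  have EH2low : q * (1 - q) ≤ ∫ ω, quantH e₀ G₀ q (T ω) ^ 2 ∂P := by
    rw [EH2, Fintype.sum_prod_type]
    have hper : ∀ x : α, (P {ω | X ω = x}).toReal * (G₀ x * (1 - 2 * q) + q ^ 2)
        ≤ ∑ p : Bool × Bool, ((P.map T) {(x, p)}).toReal • (quantH e₀ G₀ q (x, p) ^ 2) := by
      intro x
      obtain ⟨e1, e2, e3⟩ := perx x
      rw [Fintype.sum_prod_type, Fintype.sum_bool, Fintype.sum_bool, Fintype.sum_bool]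
      simp only [smul_eq_mul, quantH_tt, quantH_tf, quantH_f]
      rw [e1, e2, he₀ x]
      have haux := quantAux2 (P ({ω | Y ω ≤ θ₀} ∩ {ω | M ω = 1} ∩ {ω | X ω = x})).toReal
        (P ({ω | M ω = 1} ∩ {ω | X ω = x})).toReal (P {ω | X ω = x}).toReal
        (G₀ x) q ENNReal.toReal_nonneg (hle1 x) (hle2 x) (hAx x) (hMne x)
      nlinarith [haux, e3]
    calc q * (1 - q)
        = ∑ x : α, (P {ω | X ω = x}).toReal * (G₀ x * (1 - 2 * q) + q ^ 2) := by
          have : ∑ x : α, (P {ω | X ω = x}).toReal * (G₀ x * (1 - 2 * q) + q ^ 2)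
              = (1 - 2 * q) * (∑ x : α, G₀ x * (P {ω | X ω = x}).toReal)
                + q ^ 2 * (∑ x : α, (P {ω | X ω = x}).toReal) := by
            rw [Finset.mul_sum, Finset.mul_sum, ← Finset.sum_add_distrib]
            exact Finset.sum_congr rfl fun x _ => by ring
          rw [this, hθ₀, hSsum]; ring
      _ ≤ _ := Finset.sum_le_sum fun x _ => hper x
  -- variance formula
  have hVar : variance (fun ω => quantH e₀ G₀ q (T ω)) P
      = ∫ ω, quantH e₀ G₀ q (T ω) ^ 2 ∂P := by
    rw [variance_eq_sub hMemLp]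
    simp only [Pi.pow_apply, EH]
    ring
  constructor
  · rw [hcomp, hVar]
    exact EH2low
  · rintro ⟨hM1, hGc⟩
    have hMxSx : ∀ x : α, P ({ω | M ω = 1} ∩ {ω | X ω = x}) = P {ω | X ω = x} := by
      intro x
      refine le_antisymm (measure_mono Set.inter_subset_right) ?_
      have hc : P {ω | M ω = 1}ᶜ = 0 := by
        rw [measure_compl hsM (measure_ne_top _ _), hM1, measure_univ, tsub_self]
      calc P {ω | X ω = x}
          = P ({ω | X ω = x} ∩ {ω | M ω = 1}) + P ({ω | X ω = x} \ {ω | M ω = 1}) :=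
            (measure_inter_add_diff _ hsM).symm
        _ ≤ P ({ω | M ω = 1} ∩ {ω | X ω = x}) + 0 := by
            have h1 : P ({ω | X ω = x} ∩ {ω | M ω = 1})
                = P ({ω | M ω = 1} ∩ {ω | X ω = x}) := by rw [Set.inter_comm]
            have h2 : P ({ω | X ω = x} \ {ω | M ω = 1}) ≤ 0 := by
              calc P ({ω | X ω = x} \ {ω | M ω = 1}) ≤ P {ω | M ω = 1}ᶜ :=
                    measure_mono fun ω hω => hω.2
                _ = 0 := hc
            rw [h1]
            exact add_le_add le_rfl h2
        _ = P ({ω | M ω = 1} ∩ {ω | X ω = x}) := add_zero _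
    have EH2eq : ∫ ω, quantH e₀ G₀ q (T ω) ^ 2 ∂P = q * (1 - q) := by
      rw [EH2, Fintype.sum_prod_type]
      have hper : ∀ x : α, (∑ p : Bool × Bool, ((P.map T) {(x, p)}).toReal
            • (quantH e₀ G₀ q (x, p) ^ 2))
          = (P {ω | X ω = x}).toReal * (q * (1 - q)) := by
        intro x
        obtain ⟨e1, e2, e3⟩ := perx x
        rw [Fintype.sum_prod_type, Fintype.sum_bool, Fintype.sum_bool, Fintype.sum_bool]
        simp only [smul_eq_mul, quantH_tt, quantH_tf, quantH_f]
        rw [e1, e2, he₀ x]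
        have hGq : (P {ω | X ω = x}).toReal ≠ 0 → G₀ x = q := by
          intro hS
          exact hGc x fun h => hS (by simp [h])
        have haux := quantAux3 (P ({ω | Y ω ≤ θ₀} ∩ {ω | M ω = 1} ∩ {ω | X ω = x})).toReal
          (P ({ω | M ω = 1} ∩ {ω | X ω = x})).toReal (P {ω | X ω = x}).toReal
          (G₀ x) q ENNReal.toReal_nonneg (hle1 x) (hAx x) (by rw [hMxSx x]) hGq
        linear_combination haux + (G₀ x - q) ^ 2 * e3
      rw [Finset.sum_congr rfl (fun x _ => hper x), ← Finset.sum_mul, hSsum, one_mul]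
    rw [hcomp, hVar, EH2eq]


/-- Variance lower bound for the quantile EIF:
`Var₀(D₀(Z)) ≥ q(1-q)/f₀(θ₀)²`, with equality when `P₀(M=1) = 1` and
`G₀(θ₀|1,X)` is constant (hence equal to `q`). -/
theorem stmt19 {Ω α : Type*} [MeasurableSpace Ω] [Fintype α] [MeasurableSpace α]
    [MeasurableSingletonClass α]
    (P : Measure Ω) [IsProbabilityMeasure P]
    (X : Ω → α) (M : Ω → ℕ) (Y : Ω → ℝ)
    (hX : Measurable X) (hM : Measurable M) (hY : Measurable Y)
    (θ₀ q fθ : ℝ) (hf : 0 < fθ) (hq : q ∈ Set.Ioo (0 : ℝ) 1)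
    (e₀ G₀ : α → ℝ)
    (he₀ : ∀ x, e₀ x = (P ({ω | M ω = 1} ∩ {ω | X ω = x})).toReal
                        / (P {ω | X ω = x}).toReal)
    (hG₀ : ∀ x, G₀ x = (P ({ω | Y ω ≤ θ₀} ∩ {ω | M ω = 1} ∩ {ω | X ω = x})).toReal
                        / (P ({ω | M ω = 1} ∩ {ω | X ω = x})).toReal)
    -- conditional independence  Y ⟂ M ∣ X  (for the event {Y ≤ θ₀}):
    (hCI : ∀ x : α,
      P ({ω | Y ω ≤ θ₀} ∩ {ω | M ω = 1} ∩ {ω | X ω = x}) * P {ω | X ω = x}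
        = P ({ω | Y ω ≤ θ₀} ∩ {ω | X ω = x}) * P ({ω | M ω = 1} ∩ {ω | X ω = x}))
    -- positivity:
    (hpos : ∀ x : α, P {ω | X ω = x} ≠ 0 → P ({ω | M ω = 1} ∩ {ω | X ω = x}) ≠ 0)
    -- F₀(θ₀) = E₀[G₀(θ₀|1,X)] = q :
    (hθ₀ : ∑ x : α, G₀ x * (P {ω | X ω = x}).toReal = q) :
    q * (1 - q) / fθ ^ 2
        ≤ variance (fun ω =>
            -(1 / fθ)
              * ((Set.indicator {ω' | M ω' = 1} (fun _ => (1 : ℝ)) ω / e₀ (X ω))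
                    * (Set.indicator {ω' | Y ω' ≤ θ₀} (fun _ => (1 : ℝ)) ω - G₀ (X ω))
                  + G₀ (X ω) - q)) P
      ∧ ((P {ω | M ω = 1} = 1 ∧ ∀ x : α, P {ω | X ω = x} ≠ 0 → G₀ x = q) →
          variance (fun ω =>
              -(1 / fθ)
                * ((Set.indicator {ω' | M ω' = 1} (fun _ => (1 : ℝ)) ω / e₀ (X ω))
                      * (Set.indicator {ω' | Y ω' ≤ θ₀} (fun _ => (1 : ℝ)) ω - G₀ (X ω))
                    + G₀ (X ω) - q)) P
            = q * (1 - q) / fθ ^ 2) := by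
  
  obtain ⟨hlow, heq⟩ := quantCore P X M Y hX hM hY θ₀ q e₀ G₀ he₀ hG₀ hpos hθ₀
  have hfne : fθ ≠ 0 := ne_of_gt hf
  constructor
  · rw [variance_const_mul]
    refine le_trans (le_of_eq ?_) (mul_le_mul_of_nonneg_left hlow (sq_nonneg _))
    field_simp
  · intro hcond
    rw [variance_const_mul, heq hcond]
    field_simp
end
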